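/- Let U be a finite set of dyadic rationals in (0,1) and let g ∈ F with g ∉ H_U. Then there exists a proper subset V ⊊ U such that the subgroup ⟨H_U, g⟩ generated by H_U and g contains H_V. -/

import Mathlib

set_option maxHeartbeats 1000000

noncomputable section

/-- The unit interval `[0,1]` as a type. -/
abbrev I : Type := Set.Icc (0:ℝ) 1

/-- The underlying function of the generator `x₀` of Thompson's group `F`. -/
def x0fun (t : ℝ) : ℝ := if t ≤ 1/4 then 2*t else if t ≤ 1/2 then t + 1/4 else t/2 + 1/2

/-- The inverse of `x0fun`. -/
def x0inv (t : ℝ) : ℝ := if t ≤ 1/2 then t/2 else if t ≤ 3/4 then t - 1/4 else 2*t - 1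

/-- The underlying function of the generator `x₁` of Thompson's group `F`. -/
def x1fun (t : ℝ) : ℝ :=
  if t ≤ 1/2 then t else if t ≤ 5/8 then 2*t - 1/2 else if t ≤ 3/4 then t + 1/8 else t/2 + 1/2

/-- The inverse of `x1fun`. -/
def x1inv (t : ℝ) : ℝ :=
  if t ≤ 1/2 then t else if t ≤ 3/4 then t/2 + 1/4 else if t ≤ 7/8 then t - 1/8 else 2*t - 1

/-- The generator `x₀` of Thompson's group `F`, as a bijection of `[0,1]`. -/
def x₀ : Equiv.Perm I where
  toFun t := ⟨x0fun t.1, by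
    obtain ⟨h0, h1⟩ := Set.mem_Icc.mp t.2
    simp only [Set.mem_Icc, x0fun]
    split_ifs <;> constructor <;> linarith⟩
  invFun t := ⟨x0inv t.1, by
    obtain ⟨h0, h1⟩ := Set.mem_Icc.mp t.2
    simp only [Set.mem_Icc, x0inv]
    split_ifs <;> constructor <;> linarith⟩
  left_inv t := by
    obtain ⟨h0, h1⟩ := Set.mem_Icc.mp t.2
    apply Subtype.ext
    show x0inv (x0fun t.1) = t.1
    simp only [x0fun, x0inv]
    split_ifs <;> linarith
  right_inv t := by
    obtain ⟨h0, h1⟩ := Set.mem_Icc.mp t.2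
    apply Subtype.ext
    show x0fun (x0inv t.1) = t.1
    simp only [x0fun, x0inv]
    split_ifs <;> linarith

/-- The generator `x₁` of Thompson's group `F`, as a bijection of `[0,1]`. -/
def x₁ : Equiv.Perm I where
  toFun t := ⟨x1fun t.1, by
    obtain ⟨h0, h1⟩ := Set.mem_Icc.mp t.2
    simp only [Set.mem_Icc, x1fun]
    split_ifs <;> constructor <;> linarith⟩
  invFun t := ⟨x1inv t.1, by
    obtain ⟨h0, h1⟩ := Set.mem_Icc.mp t.2
    simp only [Set.mem_Icc, x1inv]
    split_ifs <;> constructor <;> linarith⟩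
  left_inv t := by
    obtain ⟨h0, h1⟩ := Set.mem_Icc.mp t.2
    apply Subtype.ext
    show x1inv (x1fun t.1) = t.1
    simp only [x1fun, x1inv]
    split_ifs <;> linarith
  right_inv t := by
    obtain ⟨h0, h1⟩ := Set.mem_Icc.mp t.2
    apply Subtype.ext
    show x1fun (x1inv t.1) = t.1
    simp only [x1fun, x1inv]
    split_ifs <;> linarith

/-- Composition in Thompson's group `F` is from left to right: the product `f·g` in the paper
is the function `t ↦ g (f t)`.  In Lean, `Equiv.Perm` multiplication is composition from right
to left: `(f * g) t = f (g t)`.  Hence a paper product `a₁ a₂ ⋯ aₙ` corresponds to the Lean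
product `aₙ * ⋯ * a₂ * a₁`.

`x i` is the standard generator `x_i` of Thompson's group `F`: here `x_0, x_1` are the explicit
piecewise-linear maps, and for `i ≥ 1`, `x_{i+1} = x_0^{-i} x_1 x_0^{i}` (left-to-right
composition), which in Lean's convention is `x₀ ^ i * x₁ * (x₀ ^ i)⁻¹`. -/
def x (i : ℕ) : Equiv.Perm I := if i = 0 then x₀ else x₀ ^ (i-1) * x₁ * (x₀ ^ (i-1))⁻¹

/-- Thompson's group `F`, realized as the group of increasing piecewise-linear homeomorphisms of
`[0,1]` with dyadic breakpoints and slopes powers of 2; it is generated by `x_0` and `x_1`. -/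
def F : Subgroup (Equiv.Perm I) := Subgroup.closure {x 0, x 1}

/-- The subgroup `G = ⟨x_0x_2, x_1x_2⟩` of `F` (products written left-to-right, so
`x_0x_2` is the Lean element `x 2 * x 0`). -/
def G : Subgroup (Equiv.Perm I) := Subgroup.closure {x 2 * x 0, x 2 * x 1}

/-- Jones' subgroup `F⃗ = ⟨x_0x_1, x_1x_2, x_2x_3⟩` of `F` (products written left-to-right). -/
def JonesF : Subgroup (Equiv.Perm I) := Subgroup.closure {x 1 * x 0, x 2 * x 1, x 3 * x 2}

lemma x_mem_F (i : ℕ) : x i ∈ F := by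
  have h0 : x 0 ∈ F := Subgroup.subset_closure (by simp)
  have h1 : x 1 ∈ F := Subgroup.subset_closure (by simp)
  have hx0 : x₀ ∈ F := by simpa [x] using h0
  have hx1 : x₁ ∈ F := by simpa [x] using h1
  rcases Nat.eq_zero_or_pos i with h | h
  · subst h; exact h0
  · have : x i = x₀ ^ (i-1) * x₁ * (x₀ ^ (i-1))⁻¹ := by
      simp [x, Nat.pos_iff_ne_zero.mp h]
    rw [this]
    exact mul_mem (mul_mem (pow_mem hx0 _) hx1) (inv_mem (pow_mem hx0 _))

lemma y0_mem_G : x 2 * x 0 ∈ G := Subgroup.subset_closure (by simp)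

lemma y1_mem_G : x 2 * x 1 ∈ G := Subgroup.subset_closure (by simp)

/-- The length `|w|` of an element of `F`: the minimal `n` such that `w` is a product of `n`
elements of `{x_i^{±1} : i ≥ 0}`.  This equals the length of the normal form of `w`. -/
def len (w : Equiv.Perm I) : ℕ :=
  sInf {n | ∃ l : List (Equiv.Perm I), l.length = n ∧
    (∀ a ∈ l, ∃ i : ℕ, a = x i ∨ a = (x i)⁻¹) ∧ l.prod = w}

/-- The element of `F` given by the positive word `x_{i_1} x_{i_2} ⋯ x_{i_n}` (composition from
left to right), where `l = [i_1, i_2, …, i_n]`.  Since Lean's multiplication of permutations is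
composition from right to left, this is the Lean product of the reversed list of letters. -/
def pp (l : List ℕ) : Equiv.Perm I := ((l.map x).reverse).prod

/-- `l = [i_1, …, i_n]` encodes a *block*: a positive normal form `x_{i_1}⋯x_{i_n}`
(so `i_1 ≤ ⋯ ≤ i_n`) with `i_1 ≠ i_n` and `i_j < i_1 + j` for all `j = 1, …, n`
(here with 0-based indexing: `l[k] < l[0] + k + 1`). -/
def IsBlock (l : List ℕ) : Prop :=
  l ≠ [] ∧ l.Pairwise (· ≤ ·) ∧ l.headI ≠ l.getLastD 0 ∧
    ∀ k < l.length, l.getD k 0 < l.headI + k + 1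

/-- The double coset `F⃗ a F⃗` of Jones' subgroup.  (As a set this does not depend on the
composition convention, since `u, v` range over all of `F⃗`.) -/
def dCoset (a : Equiv.Perm I) : Set (Equiv.Perm I) :=
  {w | ∃ u ∈ JonesF, ∃ v ∈ JonesF, w = v * a * u}

/-- A real number is dyadic if it has the form `a / 2^n` with `a, n` natural numbers. -/
def IsDyadic (α : ℝ) : Prop := ∃ (a : ℕ) (n : ℕ), α = a / 2^n

/-- The subgroup of all permutations fixing every point of `U`. -/
def fixing (U : Set ℝ) : Subgroup (Equiv.Perm I) where
  carrier := {g | ∀ t : I, (t : ℝ) ∈ U → g t = t}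
  one_mem' := fun _ _ => rfl
  mul_mem' := by
    intro a b ha hb t ht
    simp only [Equiv.Perm.mul_apply]
    rw [hb t ht, ha t ht]
  inv_mem' := by
    intro a ha t ht
    conv_lhs => rw [← ha t ht]
    exact a.symm_apply_apply t

/-- `H_U`: the stabilizer in `F` of the finite set `U ⊂ (0,1)`, i.e. the subgroup of all
elements of `F` fixing every point of `U`. -/
def HU (U : Set ℝ) : Subgroup (Equiv.Perm I) := F ⊓ fixing U

theorem Equiv.Perm.inv_apply_self {α : Type*} (f : Equiv.Perm α) (x : α) : f⁻¹ (f x) = x :=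
  Equiv.symm_apply_apply f x

theorem Equiv.Perm.apply_inv_self {α : Type*} (f : Equiv.Perm α) (x : α) : f (f⁻¹ x) = x :=
  Equiv.apply_symm_apply f x


set_option linter.unreachableTactic false
set_option linter.unusedTactic false

section Dev

-- ### Basic application lemmas
lemma x0_apply (t : I) : ((x₀ t : I) : ℝ) = x0fun t := rfl
lemma x0_inv_apply (t : I) : ((x₀⁻¹ t : I) : ℝ) = x0inv t := rfl
lemma x1_apply (t : I) : ((x₁ t : I) : ℝ) = x1fun t := rfl
lemma x1_inv_apply (t : I) : ((x₁⁻¹ t : I) : ℝ) = x1inv t := rfl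

lemma x_zero_eq : x 0 = x₀ := by simp [x]
lemma x_one_eq : x 1 = x₁ := by simp [x]

lemma x0_mem : x₀ ∈ F := by rw [← x_zero_eq]; exact x_mem_F 0
lemma x1_mem : x₁ ∈ F := by rw [← x_one_eq]; exact x_mem_F 1

-- ### Dyadic numbers
lemma dy_zero : IsDyadic 0 := ⟨0, 0, by norm_num⟩
lemma dy_one : IsDyadic 1 := ⟨1, 0, by norm_num⟩
lemma dy_half : IsDyadic (1/2) := ⟨1, 1, by norm_num⟩
lemma dy_quarter : IsDyadic (1/4) := ⟨1, 2, by norm_num⟩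
lemma dy_two : IsDyadic 2 := ⟨2, 0, by norm_num⟩

lemma IsDyadic.add {a b : ℝ} (ha : IsDyadic a) (hb : IsDyadic b) : IsDyadic (a + b) := by
  obtain ⟨x, n, rfl⟩ := ha; obtain ⟨y, m, rfl⟩ := hb
  refine ⟨x * 2^m + y * 2^n, n + m, ?_⟩
  have h1 : (2:ℝ)^n ≠ 0 := by positivity
  have h2 : (2:ℝ)^m ≠ 0 := by positivity
  push_cast
  rw [pow_add]
  field_simp

lemma IsDyadic.halve {a : ℝ} (ha : IsDyadic a) : IsDyadic (a / 2) := by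
  obtain ⟨x, n, rfl⟩ := ha
  exact ⟨x, n + 1, by rw [pow_succ]; ring⟩

lemma IsDyadic.sub {a b : ℝ} (ha : IsDyadic a) (hb : IsDyadic b) (h : b ≤ a) :
    IsDyadic (a - b) := by
  obtain ⟨x, n, rfl⟩ := ha; obtain ⟨y, m, rfl⟩ := hb
  have h1 : (0:ℝ) < (2:ℝ)^n := by positivity
  have h2 : (0:ℝ) < (2:ℝ)^m := by positivity
  have hle0 : (y:ℝ) * 2^n ≤ (x:ℝ) * 2^m := by
    rw [div_le_div_iff₀ h2 h1] at h; linarith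
  have hle : y * 2^n ≤ x * 2^m := by exact_mod_cast hle0
  refine ⟨x * 2^m - y * 2^n, n + m, ?_⟩
  rw [Nat.cast_sub hle]
  push_cast
  field_simp
  ring

lemma IsDyadic.double {a : ℝ} (ha : IsDyadic a) : IsDyadic (2 * a) := by
  have := ha.add ha; rwa [← two_mul] at this

lemma IsDyadic.avg {a b : ℝ} (ha : IsDyadic a) (hb : IsDyadic b) : IsDyadic ((a + b) / 2) :=
  (ha.add hb).halve

end Dev

section Dev2

/-- The point `0` of the interval. -/
def pt0 : I := ⟨0, by norm_num⟩
/-- The point `1` of the interval. -/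
def pt1 : I := ⟨1, by norm_num⟩

/-- Universal properties of elements of `F`. -/
def GoodF (f : Equiv.Perm I) : Prop :=
  (∀ s t : I, (s : ℝ) < t → ((f s : I) : ℝ) < f t) ∧
  f pt0 = pt0 ∧ f pt1 = pt1 ∧
  (∀ t : I, IsDyadic (t : ℝ) → IsDyadic ((f t : I) : ℝ)) ∧
  (∀ t : I, IsDyadic (t : ℝ) → IsDyadic ((f⁻¹ t : I) : ℝ))

lemma goodF_one : GoodF 1 := by
  refine ⟨fun s t h => h, rfl, rfl, fun t h => h, fun t h => h⟩

lemma goodF_mul {a b : Equiv.Perm I} (ha : GoodF a) (hb : GoodF b) : GoodF (a * b) := by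
  obtain ⟨ha1, ha2, ha3, ha4, ha5⟩ := ha
  obtain ⟨hb1, hb2, hb3, hb4, hb5⟩ := hb
  refine ⟨fun s t h => ha1 _ _ (hb1 _ _ h), ?_, ?_, fun t h => ha4 _ (hb4 _ h), fun t h => ?_⟩
  · show a (b pt0) = pt0; rw [hb2, ha2]
  · show a (b pt1) = pt1; rw [hb3, ha3]
  · have : (a * b)⁻¹ t = b⁻¹ (a⁻¹ t) := by rw [mul_inv_rev]; rfl
    rw [this]; exact hb5 _ (ha5 _ h)

lemma goodF_inv {a : Equiv.Perm I} (ha : GoodF a) : GoodF a⁻¹ := by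
  obtain ⟨ha1, ha2, ha3, ha4, ha5⟩ := ha
  refine ⟨fun s t h => ?_, ?_, ?_, fun t h => ha5 _ h, fun t h => by simpa using ha4 t h⟩
  · rcases lt_trichotomy ((a⁻¹ s : I) : ℝ) ((a⁻¹ t : I) : ℝ) with hc | hc | hc
    · exact hc
    · exfalso
      have : a⁻¹ s = a⁻¹ t := Subtype.ext hc
      have : s = t := by simpa using congrArg a this
      rw [this] at h; exact lt_irrefl _ h
    · exfalso
      have := ha1 _ _ hc
      rw [Equiv.Perm.apply_inv_self, Equiv.Perm.apply_inv_self] at this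
      exact lt_irrefl _ (h.trans this)
  · have h0 := congrArg (fun z => a⁻¹ z) ha2
    simpa using h0.symm
  · have h0 := congrArg (fun z => a⁻¹ z) ha3
    simpa using h0.symm

lemma goodF_x0 : GoodF x₀ := by
  refine ⟨fun s t h => ?_, ?_, ?_, fun t h => ?_, fun t h => ?_⟩
  · obtain ⟨hs0, hs1⟩ := s.2
    obtain ⟨ht0, ht1⟩ := t.2
    rw [x0_apply, x0_apply]
    simp only [x0fun]; split_ifs <;> linarith
  · apply Subtype.ext; rw [x0_apply]; show x0fun 0 = 0; norm_num [x0fun]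
  · apply Subtype.ext; rw [x0_apply]; show x0fun 1 = 1; norm_num [x0fun]
  · obtain ⟨ht0, ht1⟩ := t.2
    rw [x0_apply]
    simp only [x0fun]; split_ifs
    · exact h.double
    · exact h.add dy_quarter
    · exact h.halve.add dy_half
  · obtain ⟨ht0, ht1⟩ := t.2
    rw [x0_inv_apply]
    simp only [x0inv]; split_ifs with h1 h2
    · exact h.halve
    · exact h.sub dy_quarter (by linarith)
    · exact h.double.sub dy_one (by linarith)

lemma goodF_x1 : GoodF x₁ := by
  refine ⟨fun s t h => ?_, ?_, ?_, fun t h => ?_, fun t h => ?_⟩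
  · obtain ⟨hs0, hs1⟩ := s.2
    obtain ⟨ht0, ht1⟩ := t.2
    rw [x1_apply, x1_apply]
    simp only [x1fun]; split_ifs <;> linarith
  · apply Subtype.ext; rw [x1_apply]; show x1fun 0 = 0; norm_num [x1fun]
  · apply Subtype.ext; rw [x1_apply]; show x1fun 1 = 1; norm_num [x1fun]
  · obtain ⟨ht0, ht1⟩ := t.2
    rw [x1_apply]
    simp only [x1fun]; split_ifs
    · exact h
    · exact h.double.sub dy_half (by linarith)
    · exact h.add ⟨1, 3, by norm_num⟩
    · exact h.halve.add dy_half
  · obtain ⟨ht0, ht1⟩ := t.2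
    rw [x1_inv_apply]
    simp only [x1inv]; split_ifs
    · exact h
    · exact h.halve.add dy_quarter
    · exact h.sub ⟨1, 3, by norm_num⟩ (by linarith)
    · exact h.double.sub dy_one (by linarith)

lemma goodF_of_mem {f : Equiv.Perm I} (hf : f ∈ F) : GoodF f := by
  induction hf using Subgroup.closure_induction with
  | mem w hw =>
    rcases hw with h | h
    · rw [h, x_zero_eq]; exact goodF_x0
    · rw [h, x_one_eq]; exact goodF_x1
  | one => exact goodF_one
  | mul a b _ _ pa pb => exact goodF_mul pa pb
  | inv a _ pa => exact goodF_inv pa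

lemma F_lt {f : Equiv.Perm I} (hf : f ∈ F) {s t : I} (h : (s : ℝ) < t) :
    ((f s : I) : ℝ) < f t := (goodF_of_mem hf).1 s t h

lemma F_le {f : Equiv.Perm I} (hf : f ∈ F) {s t : I} (h : (s : ℝ) ≤ t) :
    ((f s : I) : ℝ) ≤ f t := by
  rcases eq_or_lt_of_le h with h' | h'
  · rw [Subtype.ext h']
  · exact le_of_lt (F_lt hf h')

lemma F_fix0 {f : Equiv.Perm I} (hf : f ∈ F) : f pt0 = pt0 := (goodF_of_mem hf).2.1
lemma F_fix1 {f : Equiv.Perm I} (hf : f ∈ F) : f pt1 = pt1 := (goodF_of_mem hf).2.2.1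
lemma F_dyadic {f : Equiv.Perm I} (hf : f ∈ F) {t : I} (h : IsDyadic (t : ℝ)) :
    IsDyadic ((f t : I) : ℝ) := (goodF_of_mem hf).2.2.2.1 t h

lemma F_pos {f : Equiv.Perm I} (hf : f ∈ F) {t : I} (h : 0 < (t : ℝ)) :
    0 < ((f t : I) : ℝ) := by
  have := F_lt hf (s := pt0) (t := t) h
  rwa [F_fix0 hf] at this

lemma F_lt_one {f : Equiv.Perm I} (hf : f ∈ F) {t : I} (h : (t : ℝ) < 1) :
    ((f t : I) : ℝ) < 1 := by
  have := F_lt hf (s := t) (t := pt1) h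
  rwa [F_fix1 hf] at this

end Dev2

section Dev3

/-- `f` maps the point with value `u` to the point with value `v`. -/
def MapsVal (f : Equiv.Perm I) (u v : ℝ) : Prop :=
  ∀ t : I, (t : ℝ) = u → ((f t : I) : ℝ) = v

lemma mapsVal_comp {f g : Equiv.Perm I} {u v w : ℝ}
    (hf : MapsVal f u v) (hg : MapsVal g v w) : MapsVal (g * f) u w :=
  fun t ht => hg (f t) (hf t ht)

lemma mapsVal_one (u : ℝ) : MapsVal 1 u u := fun _ ht => ht

lemma mapsVal_inv {f : Equiv.Perm I} {u v : ℝ} (hm : MapsVal f u v)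
    (h0 : 0 ≤ u) (h1 : u ≤ 1) : MapsVal f⁻¹ v u := by
  intro t ht
  have key : f ⟨u, h0, h1⟩ = t := Subtype.ext (by rw [hm ⟨u, h0, h1⟩ rfl, ht])
  rw [← key, Equiv.Perm.inv_apply_self]

lemma mapsVal_pt (f : Equiv.Perm I) (u : ℝ) (h0 : 0 ≤ u) (h1 : u ≤ 1) :
    MapsVal f u ((f ⟨u, h0, h1⟩ : I) : ℝ) := fun t ht => by
  rw [show t = (⟨u, h0, h1⟩ : I) from Subtype.ext ht]

lemma no_nat_in_gap {a k : ℕ} (h1 : (k : ℝ) < (a : ℝ)) (h2 : (a : ℝ) < (k : ℝ) + 1) : False := by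
  have hk : k < a := by exact_mod_cast h1
  have h3 : ((k : ℝ) + 1) ≤ (a : ℝ) := by exact_mod_cast Nat.succ_le_of_lt hk
  linarith

lemma reduce_step {t t' : ℝ} (w : Equiv.Perm I) (hw : w ∈ F) (hmap : MapsVal w t t')
    (hrec : ∃ f ∈ F, MapsVal f t' (1/2)) : ∃ f ∈ F, MapsVal f t (1/2) := by
  obtain ⟨f, hfF, hf⟩ := hrec
  exact ⟨f * w, mul_mem hfF hw, mapsVal_comp hmap hf⟩

end Dev3

section MV
lemma mv_c1 {t : ℝ} (h1 : t ≤ 1/4) : MapsVal x₀ t (2*t) := by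
  intro s hs
  rw [x0_apply, hs]
  simp only [x0fun]
  rw [if_pos h1]

lemma mv_c2 {t : ℝ} (ha : 1/4 < t) (hb : t ≤ 3/8) : MapsVal (x₁ * x₀) t (2*t) := by
  intro s hs
  simp only [Equiv.Perm.mul_apply, x1_apply, x0_apply, hs]
  have e1 : x0fun t = t + 1/4 := by
    simp only [x0fun]; rw [if_neg (by linarith), if_pos (by linarith)]
  rw [e1]
  simp only [x1fun]
  rw [if_neg (by linarith), if_pos (by linarith)]
  ring

lemma mv_c3 {t : ℝ} (ha : 3/8 < t) (hb : t < 1/2) :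
    MapsVal (x₀⁻¹ * x₁ * x₀) t (2*t - 1/4) := by
  intro s hs
  simp only [Equiv.Perm.mul_apply, x0_inv_apply, x1_apply, x0_apply, hs]
  have e1 : x0fun t = t + 1/4 := by
    simp only [x0fun]; rw [if_neg (by linarith), if_pos (by linarith)]
  rw [e1]
  have e2 : x1fun (t + 1/4) = t + 3/8 := by
    simp only [x1fun]
    rw [if_neg (by linarith), if_neg (by linarith), if_pos (by linarith)]
    ring
  rw [e2]
  simp only [x0inv]
  rw [if_neg (by linarith), if_neg (by linarith)]
  ring

lemma mv_c5 {t : ℝ} (ha : 1/2 < t) (hb : t ≤ 5/8) : MapsVal x₁ t (2*t - 1/2) := by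
  intro s hs
  rw [x1_apply, hs]
  simp only [x1fun]
  rw [if_neg (by linarith), if_pos (by linarith)]

lemma mv_c6 {t : ℝ} (ha : 5/8 < t) (hb : t < 3/4) :
    MapsVal (x₀⁻¹ * x₁) t (2*t - 3/4) := by
  intro s hs
  simp only [Equiv.Perm.mul_apply, x0_inv_apply, x1_apply, hs]
  have e2 : x1fun t = t + 1/8 := by
    simp only [x1fun]
    rw [if_neg (by linarith), if_neg (by linarith), if_pos (by linarith)]
  rw [e2]
  simp only [x0inv]
  rw [if_neg (by linarith), if_neg (by linarith)]
  ring

lemma mv_c7 {t : ℝ} (ha : 3/4 ≤ t) : MapsVal x₀⁻¹ t (2*t - 1) := by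
  intro s hs
  rw [x0_inv_apply, hs]
  simp only [x0inv]
  split_ifs <;> linarith
end MV

section Dev3b

lemma exists_to_half : ∀ (n a : ℕ), 0 < (a : ℝ)/2^n → (a : ℝ)/2^n < 1 →
    ∃ f ∈ F, MapsVal f ((a : ℝ)/2^n) (1/2) := by
  intro n
  induction n with
  | zero =>
    intro a h0 h1
    exfalso
    simp only [pow_zero, div_one] at h0 h1
    exact no_nat_in_gap (a := a) (k := 0) (by push_cast; linarith) (by push_cast; linarith)
  | succ n ih =>
    intro a h0 h1
    set t : ℝ := (a : ℝ)/2^(n+1) with htdef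
    have hpow0 : (0:ℝ) < 2^(n+1) := by positivity
    by_cases hmid : t = 1/2
    · exact ⟨1, one_mem F, fun s hs => by rw [show ((1 : Equiv.Perm I) s) = s from rfl, hs, hmid]⟩
    rcases le_or_gt t (1/4) with c1 | h14
    · refine reduce_step x₀ x0_mem (mv_c1 c1) ?_
      have he : (a : ℝ)/2^n = 2*t := by rw [htdef, pow_succ]; field_simp
      obtain ⟨f, hfF, hf⟩ := ih a (by rw [he]; linarith) (by rw [he]; linarith)
      rw [he] at hf
      exact ⟨f, hfF, hf⟩
    rcases le_or_gt t (3/8) with c2 | h38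
    · refine reduce_step (x₁ * x₀) (mul_mem x1_mem x0_mem) (mv_c2 h14 c2) ?_
      have he : (a : ℝ)/2^n = 2*t := by rw [htdef, pow_succ]; field_simp
      obtain ⟨f, hfF, hf⟩ := ih a (by rw [he]; linarith) (by rw [he]; linarith)
      rw [he] at hf
      exact ⟨f, hfF, hf⟩
    rcases lt_or_ge t (1/2) with c3 | h12'
    · refine reduce_step _ (mul_mem (mul_mem (inv_mem x0_mem) x1_mem) x0_mem) (mv_c3 h38 c3) ?_
      rcases n with _ | _ | m
      · exfalso
        have h34 : (3:ℝ)/4 < (a:ℝ) := by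
          rw [htdef, lt_div_iff₀ hpow0] at h38; norm_num at h38 ⊢; linarith
        have hlt : (a:ℝ) < 1 := by
          rw [htdef, div_lt_iff₀ hpow0] at c3; norm_num at c3 ⊢; linarith
        exact no_nat_in_gap (a := a) (k := 0) (by push_cast; linarith) (by push_cast; linarith)
      · exfalso
        have h32 : (3:ℝ)/2 < (a:ℝ) := by
          rw [htdef, lt_div_iff₀ hpow0] at h38; norm_num at h38 ⊢; linarith
        have hlt : (a:ℝ) < 2 := by
          rw [htdef, div_lt_iff₀ hpow0] at c3; norm_num at c3 ⊢; linarith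
        exact no_nat_in_gap (a := a) (k := 1) (by push_cast; linarith) (by push_cast; linarith)
      · have hpm : (0:ℝ) < 2^m := by positivity
        have hpowa : (2:ℝ)^(m+2+1) = 8 * 2^m := by rw [pow_add]; norm_num; ring
        have h3m : 3 * (2:ℝ)^m < (a:ℝ) := by
          rw [htdef, lt_div_iff₀ hpow0] at h38
          rw [hpowa] at h38; linarith
        have hle : 2^m ≤ a := by
          have : ((2^m : ℕ) : ℝ) ≤ (a:ℝ) := by push_cast; linarith
          exact_mod_cast this
        have he : ((a - 2^m : ℕ) : ℝ)/2^(m+2) = 2*t - 1/4 := by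
          rw [Nat.cast_sub hle, htdef]
          push_cast
          rw [show ((m:ℕ)+2+1) = m+3 from rfl, pow_add, pow_add]
          field_simp
          ring
        obtain ⟨f, hfF, hf⟩ := ih (a - 2^m) (by rw [he]; linarith) (by rw [he]; linarith)
        rw [he] at hf
        exact ⟨f, hfF, hf⟩
    have h12 : 1/2 < t := lt_of_le_of_ne h12' (fun h => hmid h.symm)
    rcases le_or_gt t (5/8) with c5 | h58
    · refine reduce_step _ x1_mem (mv_c5 h12 c5) ?_
      rcases n with _ | m
      · exfalso
        have hgt : (1:ℝ) < (a:ℝ) := by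
          rw [htdef, lt_div_iff₀ hpow0] at h12; norm_num at h12 ⊢; linarith
        have hlt : (a:ℝ) ≤ 5/4 := by
          rw [htdef, div_le_iff₀ hpow0] at c5; norm_num at c5 ⊢; linarith
        exact no_nat_in_gap (a := a) (k := 1) (by push_cast; linarith) (by push_cast; linarith)
      · have hpm : (0:ℝ) < 2^m := by positivity
        have hpowa : (2:ℝ)^(m+1+1) = 4 * 2^m := by rw [pow_add]; norm_num; ring
        have h2m : 2 * (2:ℝ)^m < (a:ℝ) := by
          rw [htdef, lt_div_iff₀ hpow0] at h12
          rw [hpowa] at h12; linarith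
        have hle : 2^m ≤ a := by
          have : ((2^m : ℕ) : ℝ) ≤ (a:ℝ) := by push_cast; linarith
          exact_mod_cast this
        have he : ((a - 2^m : ℕ) : ℝ)/2^(m+1) = 2*t - 1/2 := by
          rw [Nat.cast_sub hle, htdef]
          push_cast
          rw [show ((m:ℕ)+1+1) = m+2 from rfl, pow_add, pow_add]
          field_simp
        obtain ⟨f, hfF, hf⟩ := ih (a - 2^m) (by rw [he]; linarith) (by rw [he]; linarith)
        rw [he] at hf
        exact ⟨f, hfF, hf⟩
    rcases lt_or_ge t (3/4) with c6 | c7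
    · refine reduce_step _ (mul_mem (inv_mem x0_mem) x1_mem) (mv_c6 h58 c6) ?_
      rcases n with _ | _ | m
      · exfalso
        have hgt : (5:ℝ)/4 < (a:ℝ) := by
          rw [htdef, lt_div_iff₀ hpow0] at h58; norm_num at h58 ⊢; linarith
        have hlt : (a:ℝ) < 3/2 := by
          rw [htdef, div_lt_iff₀ hpow0] at c6; norm_num at c6 ⊢; linarith
        exact no_nat_in_gap (a := a) (k := 1) (by push_cast; linarith) (by push_cast; linarith)
      · exfalso
        have hgt : (5:ℝ)/2 < (a:ℝ) := by
          rw [htdef, lt_div_iff₀ hpow0] at h58; norm_num at h58 ⊢; linarith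
        have hlt : (a:ℝ) < 3 := by
          rw [htdef, div_lt_iff₀ hpow0] at c6; norm_num at c6 ⊢; linarith
        exact no_nat_in_gap (a := a) (k := 2) (by push_cast; linarith) (by push_cast; linarith)
      · have hpm : (0:ℝ) < 2^m := by positivity
        have hpowa : (2:ℝ)^(m+2+1) = 8 * 2^m := by rw [pow_add]; norm_num; ring
        have h5m : 5 * (2:ℝ)^m < (a:ℝ) := by
          rw [htdef, lt_div_iff₀ hpow0] at h58
          rw [hpowa] at h58; linarith
        have hle : 3 * 2^m ≤ a := by
          have : ((3 * 2^m : ℕ) : ℝ) ≤ (a:ℝ) := by push_cast; linarith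
          exact_mod_cast this
        have he : ((a - 3 * 2^m : ℕ) : ℝ)/2^(m+2) = 2*t - 3/4 := by
          rw [Nat.cast_sub hle, htdef]
          push_cast
          rw [show ((m:ℕ)+2+1) = m+3 from rfl, pow_add, pow_add]
          field_simp
          ring
        obtain ⟨f, hfF, hf⟩ := ih (a - 3 * 2^m) (by rw [he]; linarith) (by rw [he]; linarith)
        rw [he] at hf
        exact ⟨f, hfF, hf⟩
    · refine reduce_step _ (inv_mem x0_mem) (mv_c7 c7) ?_
      have hge : (3:ℝ)/4 * 2^(n+1) ≤ (a:ℝ) := by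
        rw [htdef, le_div_iff₀ hpow0] at c7; linarith
      have hpn : (0:ℝ) < 2^n := by positivity
      have hpowa : (2:ℝ)^(n+1) = 2 * 2^n := by rw [pow_succ]; ring
      have hle : 2^n ≤ a := by
        have : ((2^n : ℕ) : ℝ) ≤ (a:ℝ) := by push_cast; linarith [hpowa]
        exact_mod_cast this
      have he : ((a - 2^n : ℕ) : ℝ)/2^n = 2*t - 1 := by
        rw [Nat.cast_sub hle, htdef]
        push_cast
        rw [pow_succ]
        field_simp
      obtain ⟨f, hfF, hf⟩ := ih (a - 2^n) (by rw [he]; linarith) (by rw [he]; linarith)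
      rw [he] at hf
      exact ⟨f, hfF, hf⟩

/-- Transitivity of `F` on dyadic points of `(0,1)`. -/
lemma exists_maps_dyadic {u v : ℝ} (hu : IsDyadic u) (hv : IsDyadic v)
    (hu0 : 0 < u) (hu1 : u < 1) (hv0 : 0 < v) (hv1 : v < 1) :
    ∃ f ∈ F, MapsVal f u v := by
  obtain ⟨au, nu, rfl⟩ := hu
  obtain ⟨av, nv, rfl⟩ := hv
  obtain ⟨f1, hf1F, hf1⟩ := exists_to_half nu au hu0 hu1
  obtain ⟨f2, hf2F, hf2⟩ := exists_to_half nv av hv0 hv1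
  exact ⟨f2⁻¹ * f1, mul_mem (inv_mem hf2F) hf1F,
    mapsVal_comp hf1 (mapsVal_inv hf2 (le_of_lt hv0) (le_of_lt hv1))⟩

end Dev3b

section LiftIds

lemma lift1_x0_id : ∀ t : ℝ, 0 ≤ t → t ≤ 1 → x1fun (1/2*t + 1/2) = (x0fun (t) + 1)/2 := by
  intro t hlo hhi
  rcases eq_or_lt_of_le hlo with heq | hlo'
  · rw [← heq]; norm_num [x0fun, x1fun, x0inv, x1inv]
  rcases le_or_gt t (1/4) with hs0 | hs1
  · try rw [show x1fun (1/2*t + 1/2) = t + 1/2 from by simp only [x1fun]; rw [if_neg (by linarith), if_pos (by linarith)]; try ring]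
    try rw [show x0fun (t) = 2*t from by simp only [x0fun]; rw [if_pos (by linarith)]; try ring]
    try ring
  rcases le_or_gt t (1/2) with hs2 | hs3
  · try rw [show x1fun (1/2*t + 1/2) = 1/2*t + 5/8 from by simp only [x1fun]; rw [if_neg (by linarith), if_neg (by linarith), if_pos (by linarith)]; try ring]
    try rw [show x0fun (t) = t + 1/4 from by simp only [x0fun]; rw [if_neg (by linarith), if_pos (by linarith)]; try ring]
    try ring
  try rw [show x1fun (1/2*t + 1/2) = 1/4*t + 3/4 from by simp only [x1fun]; rw [if_neg (by linarith), if_neg (by linarith), if_neg (by linarith)]; try ring]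
  try rw [show x0fun (t) = 1/2*t + 1/2 from by simp only [x0fun]; rw [if_neg (by linarith), if_neg (by linarith)]; try ring]
  try ring

lemma lift1_x0_supp : ∀ t : ℝ, 0 ≤ t → t ≤ 1/2 → x1fun (t) = t := by
  intro t hlo hhi
  rcases eq_or_lt_of_le hlo with heq | hlo'
  · rw [← heq]; norm_num [x0fun, x1fun, x0inv, x1inv]
  try rw [show x1fun (t) = t from by simp only [x1fun]; rw [if_pos (by linarith)]; try ring]
  try ring

lemma lift1_x1_id : ∀ t : ℝ, 0 ≤ t → t ≤ 1 → x0fun (x1fun (x0inv (1/2*t + 1/2))) = (x1fun (t) + 1)/2 := by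
  intro t hlo hhi
  rcases eq_or_lt_of_le hlo with heq | hlo'
  · rw [← heq]; norm_num [x0fun, x1fun, x0inv, x1inv]
  rcases le_or_gt t (1/2) with hs0 | hs1
  · try rw [show x0inv (1/2*t + 1/2) = 1/2*t + 1/4 from by simp only [x0inv]; rw [if_neg (by linarith), if_pos (by linarith)]; try ring]
    try rw [show x1fun (1/2*t + 1/4) = 1/2*t + 1/4 from by simp only [x1fun]; rw [if_pos (by linarith)]; try ring]
    try rw [show x0fun (1/2*t + 1/4) = 1/2*t + 1/2 from by simp only [x0fun]; rw [if_neg (by linarith), if_pos (by linarith)]; try ring]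
    try rw [show x1fun (t) = t from by simp only [x1fun]; rw [if_pos (by linarith)]; try ring]
    try ring
  rcases le_or_gt t (5/8) with hs2 | hs3
  · try rw [show x0inv (1/2*t + 1/2) = t from by simp only [x0inv]; rw [if_neg (by linarith), if_neg (by linarith)]; try ring]
    try rw [show x1fun (t) = 2*t - 1/2 from by simp only [x1fun]; rw [if_neg (by linarith), if_pos (by linarith)]; try ring]
    try rw [show x0fun (2*t - 1/2) = t + 1/4 from by simp only [x0fun]; rw [if_neg (by linarith), if_neg (by linarith)]; try ring]
    try rw [show x1fun (t) = 2*t - 1/2 from by simp only [x1fun]; rw [if_neg (by linarith), if_pos (by linarith)]; try ring]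
    try ring
  rcases le_or_gt t (3/4) with hs4 | hs5
  · try rw [show x0inv (1/2*t + 1/2) = t from by simp only [x0inv]; rw [if_neg (by linarith), if_neg (by linarith)]; try ring]
    try rw [show x1fun (t) = t + 1/8 from by simp only [x1fun]; rw [if_neg (by linarith), if_neg (by linarith), if_pos (by linarith)]; try ring]
    try rw [show x0fun (t + 1/8) = 1/2*t + 9/16 from by simp only [x0fun]; rw [if_neg (by linarith), if_neg (by linarith)]; try ring]
    try rw [show x1fun (t) = t + 1/8 from by simp only [x1fun]; rw [if_neg (by linarith), if_neg (by linarith), if_pos (by linarith)]; try ring]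
    try ring
  try rw [show x0inv (1/2*t + 1/2) = t from by simp only [x0inv]; rw [if_neg (by linarith), if_neg (by linarith)]; try ring]
  try rw [show x1fun (t) = 1/2*t + 1/2 from by simp only [x1fun]; rw [if_neg (by linarith), if_neg (by linarith), if_neg (by linarith)]; try ring]
  try rw [show x0fun (1/2*t + 1/2) = 1/4*t + 3/4 from by simp only [x0fun]; rw [if_neg (by linarith), if_neg (by linarith)]; try ring]
  try rw [show x1fun (t) = 1/2*t + 1/2 from by simp only [x1fun]; rw [if_neg (by linarith), if_neg (by linarith), if_neg (by linarith)]; try ring]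
  try ring

lemma lift1_x1_supp : ∀ t : ℝ, 0 ≤ t → t ≤ 1/2 → x0fun (x1fun (x0inv (t))) = t := by
  intro t hlo hhi
  rcases eq_or_lt_of_le hlo with heq | hlo'
  · rw [← heq]; norm_num [x0fun, x1fun, x0inv, x1inv]
  try rw [show x0inv (t) = 1/2*t from by simp only [x0inv]; rw [if_pos (by linarith)]; try ring]
  try rw [show x1fun (1/2*t) = 1/2*t from by simp only [x1fun]; rw [if_pos (by linarith)]; try ring]
  try rw [show x0fun (1/2*t) = t from by simp only [x0fun]; rw [if_pos (by linarith)]; try ring]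
  try ring

lemma lift0_x0_id : ∀ t : ℝ, 0 ≤ t → t ≤ 1 → x0inv (x1inv (x0fun (x0fun (1/2*t)))) = x0fun (t)/2 := by
  intro t hlo hhi
  rcases eq_or_lt_of_le hlo with heq | hlo'
  · rw [← heq]; norm_num [x0fun, x1fun, x0inv, x1inv]
  rcases le_or_gt t (1/4) with hs0 | hs1
  · try rw [show x0fun (1/2*t) = t from by simp only [x0fun]; rw [if_pos (by linarith)]; try ring]
    try rw [show x0fun (t) = 2*t from by simp only [x0fun]; rw [if_pos (by linarith)]; try ring]
    try rw [show x1inv (2*t) = 2*t from by simp only [x1inv]; rw [if_pos (by linarith)]; try ring]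
    try rw [show x0inv (2*t) = t from by simp only [x0inv]; rw [if_pos (by linarith)]; try ring]
    try rw [show x0fun (t) = 2*t from by simp only [x0fun]; rw [if_pos (by linarith)]; try ring]
    try ring
  rcases le_or_gt t (1/2) with hs2 | hs3
  · try rw [show x0fun (1/2*t) = t from by simp only [x0fun]; rw [if_pos (by linarith)]; try ring]
    try rw [show x0fun (t) = t + 1/4 from by simp only [x0fun]; rw [if_neg (by linarith), if_pos (by linarith)]; try ring]
    try rw [show x1inv (t + 1/4) = 1/2*t + 3/8 from by simp only [x1inv]; rw [if_neg (by linarith), if_pos (by linarith)]; try ring]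
    try rw [show x0inv (1/2*t + 3/8) = 1/2*t + 1/8 from by simp only [x0inv]; rw [if_neg (by linarith), if_pos (by linarith)]; try ring]
    try rw [show x0fun (t) = t + 1/4 from by simp only [x0fun]; rw [if_neg (by linarith), if_pos (by linarith)]; try ring]
    try ring
  try rw [show x0fun (1/2*t) = 1/2*t + 1/4 from by simp only [x0fun]; rw [if_neg (by linarith), if_pos (by linarith)]; try ring]
  try rw [show x0fun (1/2*t + 1/4) = 1/4*t + 5/8 from by simp only [x0fun]; rw [if_neg (by linarith), if_neg (by linarith)]; try ring]
  try rw [show x1inv (1/4*t + 5/8) = 1/4*t + 1/2 from by simp only [x1inv]; rw [if_neg (by linarith), if_neg (by linarith), if_pos (by linarith)]; try ring]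
  try rw [show x0inv (1/4*t + 1/2) = 1/4*t + 1/4 from by simp only [x0inv]; rw [if_neg (by linarith), if_pos (by linarith)]; try ring]
  try rw [show x0fun (t) = 1/2*t + 1/2 from by simp only [x0fun]; rw [if_neg (by linarith), if_neg (by linarith)]; try ring]
  try ring

lemma lift0_x0_supp : ∀ t : ℝ, 1/2 ≤ t → t ≤ 1 → x0inv (x1inv (x0fun (x0fun (t)))) = t := by
  intro t hlo hhi
  rcases eq_or_lt_of_le hlo with heq | hlo'
  · rw [← heq]; norm_num [x0fun, x1fun, x0inv, x1inv]
  try rw [show x0fun (t) = 1/2*t + 1/2 from by simp only [x0fun]; rw [if_neg (by linarith), if_neg (by linarith)]; try ring]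
  try rw [show x0fun (1/2*t + 1/2) = 1/4*t + 3/4 from by simp only [x0fun]; rw [if_neg (by linarith), if_neg (by linarith)]; try ring]
  try rw [show x1inv (1/4*t + 3/4) = 1/2*t + 1/2 from by simp only [x1inv]; rw [if_neg (by linarith), if_neg (by linarith), if_neg (by linarith)]; try ring]
  try rw [show x0inv (1/2*t + 1/2) = t from by simp only [x0inv]; rw [if_neg (by linarith), if_neg (by linarith)]; try ring]
  try ring

lemma lift0_x1_id : ∀ t : ℝ, 0 ≤ t → t ≤ 1 → x0inv (x1inv (x0fun (x1inv (x0inv (x1fun (x1fun (x0fun (1/2*t)))))))) = x1fun (t)/2 := by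
  intro t hlo hhi
  rcases eq_or_lt_of_le hlo with heq | hlo'
  · rw [← heq]; norm_num [x0fun, x1fun, x0inv, x1inv]
  rcases le_or_gt t (1/2) with hs0 | hs1
  · try rw [show x0fun (1/2*t) = t from by simp only [x0fun]; rw [if_pos (by linarith)]; try ring]
    try rw [show x1fun (t) = t from by simp only [x1fun]; rw [if_pos (by linarith)]; try ring]
    try rw [show x1fun (t) = t from by simp only [x1fun]; rw [if_pos (by linarith)]; try ring]
    try rw [show x0inv (t) = 1/2*t from by simp only [x0inv]; rw [if_pos (by linarith)]; try ring]
    try rw [show x1inv (1/2*t) = 1/2*t from by simp only [x1inv]; rw [if_pos (by linarith)]; try ring]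
    try rw [show x0fun (1/2*t) = t from by simp only [x0fun]; rw [if_pos (by linarith)]; try ring]
    try rw [show x1inv (t) = t from by simp only [x1inv]; rw [if_pos (by linarith)]; try ring]
    try rw [show x0inv (t) = 1/2*t from by simp only [x0inv]; rw [if_pos (by linarith)]; try ring]
    try rw [show x1fun (t) = t from by simp only [x1fun]; rw [if_pos (by linarith)]; try ring]
    try ring
  rcases le_or_gt t (5/8) with hs2 | hs3
  · try rw [show x0fun (1/2*t) = 1/2*t + 1/4 from by simp only [x0fun]; rw [if_neg (by linarith), if_pos (by linarith)]; try ring]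
    try rw [show x1fun (1/2*t + 1/4) = t from by simp only [x1fun]; rw [if_neg (by linarith), if_pos (by linarith)]; try ring]
    try rw [show x1fun (t) = 2*t - 1/2 from by simp only [x1fun]; rw [if_neg (by linarith), if_pos (by linarith)]; try ring]
    try rw [show x0inv (2*t - 1/2) = 2*t - 3/4 from by simp only [x0inv]; rw [if_neg (by linarith), if_pos (by linarith)]; try ring]
    try rw [show x1inv (2*t - 3/4) = 2*t - 3/4 from by simp only [x1inv]; rw [if_pos (by linarith)]; try ring]
    try rw [show x0fun (2*t - 3/4) = 2*t - 1/2 from by simp only [x0fun]; rw [if_neg (by linarith), if_pos (by linarith)]; try ring]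
    try rw [show x1inv (2*t - 1/2) = t from by simp only [x1inv]; rw [if_neg (by linarith), if_pos (by linarith)]; try ring]
    try rw [show x0inv (t) = t - 1/4 from by simp only [x0inv]; rw [if_neg (by linarith), if_pos (by linarith)]; try ring]
    try rw [show x1fun (t) = 2*t - 1/2 from by simp only [x1fun]; rw [if_neg (by linarith), if_pos (by linarith)]; try ring]
    try ring
  rcases le_or_gt t (3/4) with hs4 | hs5
  · try rw [show x0fun (1/2*t) = 1/2*t + 1/4 from by simp only [x0fun]; rw [if_neg (by linarith), if_pos (by linarith)]; try ring]
    try rw [show x1fun (1/2*t + 1/4) = t from by simp only [x1fun]; rw [if_neg (by linarith), if_pos (by linarith)]; try ring]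
    try rw [show x1fun (t) = t + 1/8 from by simp only [x1fun]; rw [if_neg (by linarith), if_neg (by linarith), if_pos (by linarith)]; try ring]
    try rw [show x0inv (t + 1/8) = 2*t - 3/4 from by simp only [x0inv]; rw [if_neg (by linarith), if_neg (by linarith)]; try ring]
    try rw [show x1inv (2*t - 3/4) = t - 1/8 from by simp only [x1inv]; rw [if_neg (by linarith), if_pos (by linarith)]; try ring]
    try rw [show x0fun (t - 1/8) = 1/2*t + 7/16 from by simp only [x0fun]; rw [if_neg (by linarith), if_neg (by linarith)]; try ring]
    try rw [show x1inv (1/2*t + 7/16) = 1/2*t + 5/16 from by simp only [x1inv]; rw [if_neg (by linarith), if_neg (by linarith), if_pos (by linarith)]; try ring]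
    try rw [show x0inv (1/2*t + 5/16) = 1/2*t + 1/16 from by simp only [x0inv]; rw [if_neg (by linarith), if_pos (by linarith)]; try ring]
    try rw [show x1fun (t) = t + 1/8 from by simp only [x1fun]; rw [if_neg (by linarith), if_neg (by linarith), if_pos (by linarith)]; try ring]
    try ring
  try rw [show x0fun (1/2*t) = 1/2*t + 1/4 from by simp only [x0fun]; rw [if_neg (by linarith), if_pos (by linarith)]; try ring]
  try rw [show x1fun (1/2*t + 1/4) = 1/2*t + 3/8 from by simp only [x1fun]; rw [if_neg (by linarith), if_neg (by linarith), if_pos (by linarith)]; try ring]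
  try rw [show x1fun (1/2*t + 3/8) = 1/4*t + 11/16 from by simp only [x1fun]; rw [if_neg (by linarith), if_neg (by linarith), if_neg (by linarith)]; try ring]
  try rw [show x0inv (1/4*t + 11/16) = 1/2*t + 3/8 from by simp only [x0inv]; rw [if_neg (by linarith), if_neg (by linarith)]; try ring]
  try rw [show x1inv (1/2*t + 3/8) = 1/2*t + 1/4 from by simp only [x1inv]; rw [if_neg (by linarith), if_neg (by linarith), if_pos (by linarith)]; try ring]
  try rw [show x0fun (1/2*t + 1/4) = 1/4*t + 5/8 from by simp only [x0fun]; rw [if_neg (by linarith), if_neg (by linarith)]; try ring]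
  try rw [show x1inv (1/4*t + 5/8) = 1/4*t + 1/2 from by simp only [x1inv]; rw [if_neg (by linarith), if_neg (by linarith), if_pos (by linarith)]; try ring]
  try rw [show x0inv (1/4*t + 1/2) = 1/4*t + 1/4 from by simp only [x0inv]; rw [if_neg (by linarith), if_pos (by linarith)]; try ring]
  try rw [show x1fun (t) = 1/2*t + 1/2 from by simp only [x1fun]; rw [if_neg (by linarith), if_neg (by linarith), if_neg (by linarith)]; try ring]
  try ring

lemma lift0_x1_supp : ∀ t : ℝ, 1/2 ≤ t → t ≤ 1 → x0inv (x1inv (x0fun (x1inv (x0inv (x1fun (x1fun (x0fun (t)))))))) = t := by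
  intro t hlo hhi
  rcases eq_or_lt_of_le hlo with heq | hlo'
  · rw [← heq]; norm_num [x0fun, x1fun, x0inv, x1inv]
  try rw [show x0fun (t) = 1/2*t + 1/2 from by simp only [x0fun]; rw [if_neg (by linarith), if_neg (by linarith)]; try ring]
  try rw [show x1fun (1/2*t + 1/2) = 1/4*t + 3/4 from by simp only [x1fun]; rw [if_neg (by linarith), if_neg (by linarith), if_neg (by linarith)]; try ring]
  try rw [show x1fun (1/4*t + 3/4) = 1/8*t + 7/8 from by simp only [x1fun]; rw [if_neg (by linarith), if_neg (by linarith), if_neg (by linarith)]; try ring]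
  try rw [show x0inv (1/8*t + 7/8) = 1/4*t + 3/4 from by simp only [x0inv]; rw [if_neg (by linarith), if_neg (by linarith)]; try ring]
  try rw [show x1inv (1/4*t + 3/4) = 1/2*t + 1/2 from by simp only [x1inv]; rw [if_neg (by linarith), if_neg (by linarith), if_neg (by linarith)]; try ring]
  try rw [show x0fun (1/2*t + 1/2) = 1/4*t + 3/4 from by simp only [x0fun]; rw [if_neg (by linarith), if_neg (by linarith)]; try ring]
  try rw [show x1inv (1/4*t + 3/4) = 1/2*t + 1/2 from by simp only [x1inv]; rw [if_neg (by linarith), if_neg (by linarith), if_neg (by linarith)]; try ring]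
  try rw [show x0inv (1/2*t + 1/2) = t from by simp only [x0inv]; rw [if_neg (by linarith), if_neg (by linarith)]; try ring]
  try ring

end LiftIds

section Dev5

/-- `f` is supported in `[p,q]`. -/
def SuppIn (f : Equiv.Perm I) (p q : ℝ) : Prop :=
  ∀ t : I, ((t : ℝ) ≤ p ∨ q ≤ (t : ℝ)) → f t = t

lemma suppIn_mul {f g : Equiv.Perm I} {p q : ℝ} (h1 : SuppIn f p q) (h2 : SuppIn g p q) :
    SuppIn (f * g) p q := fun t ht => by
  rw [Equiv.Perm.mul_apply, h2 t ht, h1 t ht]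

lemma suppIn_inv {f : Equiv.Perm I} {p q : ℝ} (h : SuppIn f p q) : SuppIn f⁻¹ p q := by
  intro t ht
  conv_lhs => rw [← h t ht]
  rw [Equiv.Perm.inv_apply_self]

lemma suppIn_one (p q : ℝ) : SuppIn 1 p q := fun _ _ => rfl

lemma suppIn_fixval {f : Equiv.Perm I} {p q u : ℝ} (h : SuppIn f p q)
    (hu : u ≤ p ∨ q ≤ u) : MapsVal f u u := by
  intro t ht
  rw [h t (by rw [ht]; exact hu), ht]

/-- `e'` is a copy of `e` acting inside the image of `κ`, supported in `[c,d]`. -/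
def LiftsTo (κ : ℝ → ℝ) (c d : ℝ) (e e' : Equiv.Perm I) : Prop :=
  (∀ (t : I) (h : κ (t : ℝ) ∈ Set.Icc (0:ℝ) 1),
      ((e' ⟨κ (t : ℝ), h⟩ : I) : ℝ) = κ ((e t : I) : ℝ)) ∧ SuppIn e' c d

lemma liftsTo_one (κ : ℝ → ℝ) (c d : ℝ) : LiftsTo κ c d 1 1 :=
  ⟨fun _ _ => rfl, suppIn_one c d⟩

lemma liftsTo_mul {κ : ℝ → ℝ} {c d : ℝ} (hκ : ∀ t : I, κ (t : ℝ) ∈ Set.Icc (0:ℝ) 1)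
    {e1 e2 e1' e2' : Equiv.Perm I}
    (h1 : LiftsTo κ c d e1 e1') (h2 : LiftsTo κ c d e2 e2') :
    LiftsTo κ c d (e1 * e2) (e1' * e2') := by
  refine ⟨fun t h => ?_, suppIn_mul h1.2 h2.2⟩
  rw [Equiv.Perm.mul_apply]
  have step2 : e2' ⟨κ (t : ℝ), h⟩ = ⟨κ ((e2 t : I) : ℝ), hκ (e2 t)⟩ :=
    Subtype.ext (h2.1 t h)
  rw [step2, Equiv.Perm.mul_apply]
  exact h1.1 (e2 t) (hκ (e2 t))

lemma liftsTo_inv {κ : ℝ → ℝ} {c d : ℝ} (hκ : ∀ t : I, κ (t : ℝ) ∈ Set.Icc (0:ℝ) 1)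
    {e e' : Equiv.Perm I} (h : LiftsTo κ c d e e') : LiftsTo κ c d e⁻¹ e'⁻¹ := by
  refine ⟨fun t ht => ?_, suppIn_inv h.2⟩
  have hs : e (e⁻¹ t) = t := Equiv.Perm.apply_inv_self e t
  have h2 : e' ⟨κ ((e⁻¹ t : I) : ℝ), hκ (e⁻¹ t)⟩ = ⟨κ (t : ℝ), ht⟩ :=
    Subtype.ext (by rw [h.1 (e⁻¹ t) (hκ (e⁻¹ t)), hs])
  have h3 : e'⁻¹ ⟨κ (t : ℝ), ht⟩ = ⟨κ ((e⁻¹ t : I) : ℝ), hκ (e⁻¹ t)⟩ := by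
    rw [← h2, Equiv.Perm.inv_apply_self]
  rw [h3]

lemma lift_exists {κ : ℝ → ℝ} {c d : ℝ} (hκ : ∀ t : I, κ (t : ℝ) ∈ Set.Icc (0:ℝ) 1)
    (h0 : ∃ w ∈ F, LiftsTo κ c d x₀ w) (h1 : ∃ w ∈ F, LiftsTo κ c d x₁ w) :
    ∀ e ∈ F, ∃ e' ∈ F, LiftsTo κ c d e e' := by
  intro e he
  induction he using Subgroup.closure_induction with
  | mem w hw =>
    rcases hw with h | h
    · rw [h, x_zero_eq]; exact h0
    · rw [h, x_one_eq]; exact h1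
  | one => exact ⟨1, one_mem F, liftsTo_one κ c d⟩
  | mul a b _ _ pa pb =>
    obtain ⟨a', ha'F, ha'⟩ := pa
    obtain ⟨b', hb'F, hb'⟩ := pb
    exact ⟨a' * b', mul_mem ha'F hb'F, liftsTo_mul hκ ha' hb'⟩
  | inv a _ pa =>
    obtain ⟨a', ha'F, ha'⟩ := pa
    exact ⟨a'⁻¹, inv_mem ha'F, liftsTo_inv hκ ha'⟩

lemma liftsTo_point {κ : ℝ → ℝ} {c d : ℝ} {e e' : Equiv.Perm I}
    (h : LiftsTo κ c d e e') {u v : ℝ} (hu0 : 0 ≤ u) (hu1 : u ≤ 1)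
    (hκu : κ u ∈ Set.Icc (0:ℝ) 1) (hm : MapsVal e u v) : MapsVal e' (κ u) (κ v) := by
  intro t ht
  have h1 := h.1 ⟨u, hu0, hu1⟩ hκu
  have ht' : t = ⟨κ u, by rw [← ht]; exact t.2⟩ := Subtype.ext ht
  rw [ht']
  have : ((e ⟨u, hu0, hu1⟩ : I) : ℝ) = v := hm ⟨u, hu0, hu1⟩ rfl
  rw [this] at h1
  exact h1

end Dev5

section Dev6

/-- Affine embedding of `[0,1]` onto `[0,1/2]`. -/
def κ0 : ℝ → ℝ := fun u => u/2
/-- Affine embedding of `[0,1]` onto `[1/2,1]`. -/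
def κ1 : ℝ → ℝ := fun u => (u + 1)/2


lemma kappa1_mem : ∀ t : I, ((t : ℝ) + 1)/2 ∈ Set.Icc (0:ℝ) 1 := fun t => by
  obtain ⟨h0, h1⟩ := t.2; constructor <;> [linarith; linarith]

lemma kappa0_mem : ∀ t : I, (t : ℝ)/2 ∈ Set.Icc (0:ℝ) 1 := fun t => by
  obtain ⟨h0, h1⟩ := t.2; constructor <;> [linarith; linarith]

lemma lift1_x0_lift : LiftsTo κ1 (1/2) 1 x₀ x₁ := by
  constructor
  · intro t h
    obtain ⟨h0, h1⟩ := t.2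
    simp only [κ1]
    show x1fun (((t : ℝ) + 1)/2) = ((x0fun (t : ℝ)) + 1)/2
    rw [show ((t : ℝ) + 1)/2 = 1/2 * (t : ℝ) + 1/2 from by ring]
    exact lift1_x0_id (t : ℝ) h0 h1
  · intro t ht
    obtain ⟨h0, h1⟩ := t.2
    apply Subtype.ext
    rw [x1_apply]
    rcases ht with ht | ht
    · exact lift1_x0_supp (t : ℝ) h0 ht
    · have : (t : ℝ) = 1 := le_antisymm h1 ht
      rw [this]; norm_num [x1fun]

lemma lift1_x1_lift : LiftsTo κ1 (1/2) 1 x₁ (x₀ * x₁ * x₀⁻¹) := by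
  constructor
  · intro t h
    obtain ⟨h0, h1⟩ := t.2
    simp only [Equiv.Perm.mul_apply, x0_apply, x1_apply, x0_inv_apply, x1_inv_apply, κ0, κ1]
    show x0fun (x1fun (x0inv (((t : ℝ) + 1)/2))) = ((x1fun (t : ℝ)) + 1)/2
    rw [show ((t : ℝ) + 1)/2 = 1/2 * (t : ℝ) + 1/2 from by ring]
    exact lift1_x1_id (t : ℝ) h0 h1
  · intro t ht
    obtain ⟨h0, h1⟩ := t.2
    apply Subtype.ext
    simp only [Equiv.Perm.mul_apply, x0_apply, x1_apply, x0_inv_apply, x1_inv_apply, κ0, κ1]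
    show x0fun (x1fun (x0inv (t : ℝ))) = (t : ℝ)
    rcases ht with ht | ht
    · exact lift1_x1_supp (t : ℝ) h0 ht
    · have : (t : ℝ) = 1 := le_antisymm h1 ht
      rw [this]; norm_num [x0fun, x1fun, x0inv]

lemma lift0_x0_lift : LiftsTo κ0 0 (1/2) x₀ (x₀⁻¹ * x₁⁻¹ * x₀ * x₀) := by
  constructor
  · intro t h
    obtain ⟨h0, h1⟩ := t.2
    simp only [Equiv.Perm.mul_apply, x0_apply, x1_apply, x0_inv_apply, x1_inv_apply, κ0, κ1]
    show x0inv (x1inv (x0fun (x0fun ((t : ℝ)/2)))) = (x0fun (t : ℝ))/2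
    rw [show ((t : ℝ))/2 = 1/2 * (t : ℝ) from by ring]
    exact lift0_x0_id (t : ℝ) h0 h1
  · intro t ht
    obtain ⟨h0, h1⟩ := t.2
    apply Subtype.ext
    simp only [Equiv.Perm.mul_apply, x0_apply, x1_apply, x0_inv_apply, x1_inv_apply, κ0, κ1]
    show x0inv (x1inv (x0fun (x0fun (t : ℝ)))) = (t : ℝ)
    rcases ht with ht | ht
    · have : (t : ℝ) = 0 := le_antisymm ht h0
      rw [this]; norm_num [x0fun, x1inv, x0inv]
    · exact lift0_x0_supp (t : ℝ) ht h1

lemma lift0_x1_lift : LiftsTo κ0 0 (1/2) x₁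
    (x₀⁻¹ * x₁⁻¹ * x₀ * x₁⁻¹ * x₀⁻¹ * x₁ * x₁ * x₀) := by
  constructor
  · intro t h
    obtain ⟨h0, h1⟩ := t.2
    simp only [Equiv.Perm.mul_apply, x0_apply, x1_apply, x0_inv_apply, x1_inv_apply, κ0, κ1]
    show x0inv (x1inv (x0fun (x1inv (x0inv (x1fun (x1fun (x0fun ((t : ℝ)/2)))))))) =
      (x1fun (t : ℝ))/2
    rw [show ((t : ℝ))/2 = 1/2 * (t : ℝ) from by ring]
    exact lift0_x1_id (t : ℝ) h0 h1
  · intro t ht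
    obtain ⟨h0, h1⟩ := t.2
    apply Subtype.ext
    simp only [Equiv.Perm.mul_apply, x0_apply, x1_apply, x0_inv_apply, x1_inv_apply, κ0, κ1]
    show x0inv (x1inv (x0fun (x1inv (x0inv (x1fun (x1fun (x0fun (t : ℝ)))))))) = (t : ℝ)
    rcases ht with ht | ht
    · have : (t : ℝ) = 0 := le_antisymm ht h0
      rw [this]; norm_num [x0fun, x1fun, x1inv, x0inv]
    · exact lift0_x1_supp (t : ℝ) ht h1

lemma lift1_exists : ∀ e ∈ F, ∃ e' ∈ F, LiftsTo κ1 (1/2) 1 e e' :=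
  lift_exists kappa1_mem ⟨x₁, x1_mem, lift1_x0_lift⟩
    ⟨x₀ * x₁ * x₀⁻¹, mul_mem (mul_mem x0_mem x1_mem) (inv_mem x0_mem), lift1_x1_lift⟩

lemma lift0_exists : ∀ e ∈ F, ∃ e' ∈ F, LiftsTo κ0 0 (1/2) e e' :=
  lift_exists kappa0_mem
    ⟨x₀⁻¹ * x₁⁻¹ * x₀ * x₀,
      mul_mem (mul_mem (mul_mem (inv_mem x0_mem) (inv_mem x1_mem)) x0_mem) x0_mem,
      lift0_x0_lift⟩
    ⟨x₀⁻¹ * x₁⁻¹ * x₀ * x₁⁻¹ * x₀⁻¹ * x₁ * x₁ * x₀,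
      mul_mem (mul_mem (mul_mem (mul_mem (mul_mem (mul_mem (mul_mem
        (inv_mem x0_mem) (inv_mem x1_mem)) x0_mem) (inv_mem x1_mem))
        (inv_mem x0_mem)) x1_mem) x1_mem) x0_mem,
      lift0_x1_lift⟩

end Dev6

section Dev7

lemma mapsVal_congr {f : Equiv.Perm I} {u u' v v' : ℝ} (h : MapsVal f u v)
    (hu : u = u') (hv : v = v') : MapsVal f u' v' := by subst hu; subst hv; exact h

lemma mapsVal_fix0 {f : Equiv.Perm I} (hf : f ∈ F) : MapsVal f 0 0 := by
  intro t ht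
  rw [show t = pt0 from Subtype.ext ht, F_fix0 hf]; rfl

lemma mapsVal_fix1 {f : Equiv.Perm I} (hf : f ∈ F) : MapsVal f 1 1 := by
  intro t ht
  rw [show t = pt1 from Subtype.ext ht, F_fix1 hf]; rfl

lemma conj_supp_maps {f g : Equiv.Perm I} (hf : f ∈ F)
    {p q a b c d A B : ℝ}
    (hp0 : 0 ≤ p) (hq1 : q ≤ 1) (hpa : p < a) (hpb : p < b) (haq : a < q) (hbq : b < q)
    (hfp : MapsVal f p c) (hfq : MapsVal f q d)
    (hsg : SuppIn g c d)
    (hA : MapsVal f a A) (hB : MapsVal f b B) (hgAB : MapsVal g A B) :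
    SuppIn (f⁻¹ * g * f) p q ∧ MapsVal (f⁻¹ * g * f) a b := by
  have hpI : p ≤ 1 := le_trans (le_of_lt (lt_trans hpa haq)) hq1
  have hqI : 0 ≤ q := le_trans hp0 (le_of_lt (lt_trans hpa haq))
  constructor
  · intro t ht
    have hft : g (f t) = f t := by
      apply hsg
      rcases ht with ht | ht
      · left
        have := F_le hf (s := t) (t := ⟨p, hp0, hpI⟩) ht
        rwa [hfp ⟨p, hp0, hpI⟩ rfl] at this
      · right
        have := F_le hf (s := ⟨q, hqI, hq1⟩) (t := t) ht
        rwa [hfq ⟨q, hqI, hq1⟩ rfl] at this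
    show f⁻¹ (g (f t)) = t
    rw [hft, Equiv.Perm.inv_apply_self]
  · intro t ht
    show ((f⁻¹ (g (f t)) : I) : ℝ) = b
    have h1 : ((f t : I) : ℝ) = A := hA t ht
    have h2 : ((g (f t) : I) : ℝ) = B := hgAB (f t) h1
    have h3 : MapsVal f⁻¹ B b := mapsVal_inv hB (by linarith) (by linarith)
    exact h3 (g (f t)) h2

/-- Supported transitivity: an element of `F` supported in `[p,q]` taking `a` to `b`. -/
lemma S1 {p q a b : ℝ} (hp : IsDyadic p) (hq : IsDyadic q) (ha : IsDyadic a) (hb : IsDyadic b)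
    (hp0 : 0 ≤ p) (hq1 : q ≤ 1) (hpa : p < a) (hpb : p < b) (haq : a < q) (hbq : b < q) :
    ∃ s ∈ F, SuppIn s p q ∧ MapsVal s a b := by
  have ha0 : 0 < a := lt_of_le_of_lt hp0 hpa
  have ha1 : a < 1 := lt_of_lt_of_le haq hq1
  have hb0 : 0 < b := lt_of_le_of_lt hp0 hpb
  have hb1 : b < 1 := lt_of_lt_of_le hbq hq1
  by_cases hp' : p = 0
  · by_cases hq' : q = 1
    · -- free case
      obtain ⟨g, hgF, hg⟩ := exists_maps_dyadic ha hb ha0 ha1 hb0 hb1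
      refine ⟨g, hgF, fun t ht => ?_, hg⟩
      rcases ht with ht | ht
      · rw [show t = pt0 from Subtype.ext (le_antisymm (by rw [hp'] at ht; exact ht) t.2.1),
          F_fix0 hgF]
      · rw [show t = pt1 from Subtype.ext (le_antisymm t.2.2 (by rw [hq'] at ht; exact ht)),
          F_fix1 hgF]
    · -- p = 0, q < 1 : conjugate into [0, 1/2]
      have hqlt : q < 1 := lt_of_le_of_ne hq1 hq'
      have hq0 : 0 < q := lt_of_le_of_lt hp0 (lt_trans hpa haq)
      obtain ⟨f, hfF, hfq⟩ := exists_maps_dyadic hq dy_half hq0 hqlt (by norm_num) (by norm_num)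
      set A := ((f ⟨a, le_of_lt ha0, le_of_lt ha1⟩ : I) : ℝ) with hAdef
      set B := ((f ⟨b, le_of_lt hb0, le_of_lt hb1⟩ : I) : ℝ) with hBdef
      have hA : MapsVal f a A := mapsVal_pt f a (le_of_lt ha0) (le_of_lt ha1)
      have hB : MapsVal f b B := mapsVal_pt f b (le_of_lt hb0) (le_of_lt hb1)
      have hA0 : 0 < A := F_pos hfF ha0
      have hB0 : 0 < B := F_pos hfF hb0
      have hA2 : A < 1/2 := by
        have := F_lt hfF (s := ⟨a, le_of_lt ha0, le_of_lt ha1⟩)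
          (t := ⟨q, le_of_lt hq0, hq1⟩) haq
        rwa [hfq ⟨q, le_of_lt hq0, hq1⟩ rfl] at this
      have hB2 : B < 1/2 := by
        have := F_lt hfF (s := ⟨b, le_of_lt hb0, le_of_lt hb1⟩)
          (t := ⟨q, le_of_lt hq0, hq1⟩) hbq
        rwa [hfq ⟨q, le_of_lt hq0, hq1⟩ rfl] at this
      have hAd : IsDyadic A := F_dyadic hfF ha
      have hBd : IsDyadic B := F_dyadic hfF hb
      obtain ⟨g0, hg0F, hg0⟩ := exists_maps_dyadic hAd.double hBd.double
        (by linarith) (by linarith) (by linarith) (by linarith)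
      obtain ⟨g, hgF, hglift⟩ := lift0_exists g0 hg0F
      have hgAB : MapsVal g A B := by
        refine mapsVal_congr (liftsTo_point hglift (u := 2*A) (by linarith) (by linarith)
          ?_ hg0) ?_ ?_
        · simp only [κ0]; constructor <;> linarith
        · simp only [κ0]; ring
        · simp only [κ0]; ring
      have key := conj_supp_maps hfF hp0 hq1 hpa hpb haq hbq
        (c := 0) (d := 1/2) (by rw [hp']; exact mapsVal_fix0 hfF) hfq hglift.2 hA hB hgAB
      exact ⟨f⁻¹ * g * f, mul_mem (mul_mem (inv_mem hfF) hgF) hfF, key⟩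
  · have hplt : 0 < p := lt_of_le_of_ne hp0 (fun h => hp' h.symm)
    have hpq1 : p < 1 := lt_of_lt_of_le (lt_trans hpa haq) hq1
    by_cases hq' : q = 1
    · -- 0 < p, q = 1 : conjugate into [1/2, 1]
      obtain ⟨f, hfF, hfp⟩ := exists_maps_dyadic hp dy_half hplt hpq1 (by norm_num) (by norm_num)
      set A := ((f ⟨a, le_of_lt ha0, le_of_lt ha1⟩ : I) : ℝ) with hAdef
      set B := ((f ⟨b, le_of_lt hb0, le_of_lt hb1⟩ : I) : ℝ) with hBdef
      have hA : MapsVal f a A := mapsVal_pt f a (le_of_lt ha0) (le_of_lt ha1)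
      have hB : MapsVal f b B := mapsVal_pt f b (le_of_lt hb0) (le_of_lt hb1)
      have hA1 : A < 1 := F_lt_one hfF ha1
      have hB1 : B < 1 := F_lt_one hfF hb1
      have hA2 : 1/2 < A := by
        have := F_lt hfF (s := ⟨p, hp0, le_of_lt hpq1⟩)
          (t := ⟨a, le_of_lt ha0, le_of_lt ha1⟩) hpa
        rwa [hfp ⟨p, hp0, le_of_lt hpq1⟩ rfl] at this
      have hB2 : 1/2 < B := by
        have := F_lt hfF (s := ⟨p, hp0, le_of_lt hpq1⟩)
          (t := ⟨b, le_of_lt hb0, le_of_lt hb1⟩) hpb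
        rwa [hfp ⟨p, hp0, le_of_lt hpq1⟩ rfl] at this
      have hAd : IsDyadic A := F_dyadic hfF ha
      have hBd : IsDyadic B := F_dyadic hfF hb
      obtain ⟨g0, hg0F, hg0⟩ := exists_maps_dyadic (hAd.double.sub dy_one (by linarith))
        (hBd.double.sub dy_one (by linarith))
        (by linarith) (by linarith) (by linarith) (by linarith)
      obtain ⟨g, hgF, hglift⟩ := lift1_exists g0 hg0F
      have hgAB : MapsVal g A B := by
        refine mapsVal_congr (liftsTo_point hglift (u := 2*A - 1) (by linarith) (by linarith)
          ?_ hg0) ?_ ?_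
        · simp only [κ1]; constructor <;> linarith
        · simp only [κ1]; ring
        · simp only [κ1]; ring
      have key := conj_supp_maps hfF hp0 hq1 hpa hpb haq hbq
        (c := 1/2) (d := 1) hfp (by rw [hq']; exact mapsVal_fix1 hfF) hglift.2 hA hB hgAB
      exact ⟨f⁻¹ * g * f, mul_mem (mul_mem (inv_mem hfF) hgF) hfF, key⟩
    · -- interior case : conjugate into [1/2, 3/4]
      have hqlt : q < 1 := lt_of_le_of_ne hq1 hq'
      have hq0 : 0 < q := lt_of_le_of_lt hp0 (lt_trans hpa haq)
      obtain ⟨f1, hf1F, hf1p⟩ := exists_maps_dyadic hp dy_half hplt hpq1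
        (by norm_num) (by norm_num)
      set Q := ((f1 ⟨q, le_of_lt hq0, hq1⟩ : I) : ℝ) with hQdef
      have hf1q : MapsVal f1 q Q := mapsVal_pt f1 q (le_of_lt hq0) hq1
      have hQ1 : Q < 1 := F_lt_one hf1F hqlt
      have hQ2 : 1/2 < Q := by
        have := F_lt hf1F (s := ⟨p, hp0, le_of_lt hpq1⟩)
          (t := ⟨q, le_of_lt hq0, hq1⟩) (lt_trans hpa haq)
        rwa [hf1p ⟨p, hp0, le_of_lt hpq1⟩ rfl] at this
      have hQd : IsDyadic Q := F_dyadic hf1F hq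
      obtain ⟨g2, hg2F, hg2⟩ := exists_maps_dyadic (hQd.double.sub dy_one (by linarith))
        dy_half (by linarith) (by linarith) (by norm_num) (by norm_num)
      obtain ⟨f2, hf2F, hf2lift⟩ := lift1_exists g2 hg2F
      have hf2Q : MapsVal f2 Q (3/4) := by
        refine mapsVal_congr (liftsTo_point hf2lift (u := 2*Q - 1) (by linarith) (by linarith)
          ?_ hg2) ?_ ?_
        · simp only [κ1]; constructor <;> linarith
        · simp only [κ1]; ring
        · simp only [κ1]; norm_num
      set f := f2 * f1 with hfdef
      have hfF : f ∈ F := mul_mem hf2F hf1F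
      have hfp : MapsVal f p (1/2) :=
        mapsVal_comp hf1p (suppIn_fixval hf2lift.2 (Or.inl (le_refl (1/2 : ℝ))))
      have hfq : MapsVal f q (3/4) := mapsVal_comp hf1q hf2Q
      set A := ((f ⟨a, le_of_lt ha0, le_of_lt ha1⟩ : I) : ℝ) with hAdef
      set B := ((f ⟨b, le_of_lt hb0, le_of_lt hb1⟩ : I) : ℝ) with hBdef
      have hA : MapsVal f a A := mapsVal_pt f a (le_of_lt ha0) (le_of_lt ha1)
      have hB : MapsVal f b B := mapsVal_pt f b (le_of_lt hb0) (le_of_lt hb1)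
      have hA2 : 1/2 < A := by
        have := F_lt hfF (s := ⟨p, hp0, le_of_lt hpq1⟩)
          (t := ⟨a, le_of_lt ha0, le_of_lt ha1⟩) hpa
        rwa [hfp ⟨p, hp0, le_of_lt hpq1⟩ rfl] at this
      have hA3 : A < 3/4 := by
        have := F_lt hfF (s := ⟨a, le_of_lt ha0, le_of_lt ha1⟩)
          (t := ⟨q, le_of_lt hq0, hq1⟩) haq
        rwa [hfq ⟨q, le_of_lt hq0, hq1⟩ rfl] at this
      have hB2 : 1/2 < B := by
        have := F_lt hfF (s := ⟨p, hp0, le_of_lt hpq1⟩)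
          (t := ⟨b, le_of_lt hb0, le_of_lt hb1⟩) hpb
        rwa [hfp ⟨p, hp0, le_of_lt hpq1⟩ rfl] at this
      have hB3 : B < 3/4 := by
        have := F_lt hfF (s := ⟨b, le_of_lt hb0, le_of_lt hb1⟩)
          (t := ⟨q, le_of_lt hq0, hq1⟩) hbq
        rwa [hfq ⟨q, le_of_lt hq0, hq1⟩ rfl] at this
      have hAd : IsDyadic A := F_dyadic hfF ha
      have hBd : IsDyadic B := F_dyadic hfF hb
      obtain ⟨g0, hg0F, hg0⟩ := exists_maps_dyadic
        (hAd.double.double.sub dy_two (by linarith))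
        (hBd.double.double.sub dy_two (by linarith))
        (by linarith) (by linarith) (by linarith) (by linarith)
      obtain ⟨g', hg'F, hg'lift⟩ := lift0_exists g0 hg0F
      have hg'maps : MapsVal g' (2*A - 1) (2*B - 1) := by
        refine mapsVal_congr (liftsTo_point hg'lift (u := 2*(2*A) - 2) (by linarith) (by linarith)
          ?_ hg0) ?_ ?_
        · simp only [κ0]; constructor <;> linarith
        · simp only [κ0]; ring
        · simp only [κ0]; ring
      obtain ⟨g, hgF, hglift⟩ := lift1_exists g' hg'F
      have hgAB : MapsVal g A B := by
        refine mapsVal_congr (liftsTo_point hglift (u := 2*A - 1) (by linarith) (by linarith)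
          ?_ hg'maps) ?_ ?_
        · simp only [κ1]; constructor <;> linarith
        · simp only [κ1]; ring
        · simp only [κ1]; ring
      have hsg : SuppIn g (1/2) (3/4) := by
        intro t ht
        rcases ht with ht | ht
        · exact hglift.2 t (Or.inl ht)
        · have hu0 : (0:ℝ) ≤ 2*(t:ℝ) - 1 := by obtain ⟨u0, u1⟩ := t.2; linarith
          have hu1 : 2*(t:ℝ) - 1 ≤ 1 := by obtain ⟨u0, u1⟩ := t.2; linarith
          have hfixg' : MapsVal g' (2*(t:ℝ) - 1) (2*(t:ℝ) - 1) :=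
            suppIn_fixval hg'lift.2 (Or.inr (by linarith))
          have hfixg : MapsVal g (κ1 (2*(t:ℝ) - 1)) (κ1 (2*(t:ℝ) - 1)) :=
            liftsTo_point hglift hu0 hu1
              (by obtain ⟨u0, u1⟩ := t.2; simp only [κ1]; constructor <;> linarith)
              hfixg'
          have hteq : (t : ℝ) = κ1 (2*(t:ℝ) - 1) := by simp only [κ1]; ring
          exact Subtype.ext ((hfixg t hteq).trans hteq.symm)
      have key := conj_supp_maps hfF hp0 hq1 hpa hpb haq hbq
        (c := 1/2) (d := 3/4) hfp hfq hsg hA hB hgAB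
      exact ⟨f⁻¹ * g * f, mul_mem (mul_mem (inv_mem hfF) hgF) hfF, key⟩

end Dev7

section Dev8

lemma mem_HU {U : Set ℝ} {f : Equiv.Perm I} :
    f ∈ HU U ↔ f ∈ F ∧ ∀ t : I, (t : ℝ) ∈ U → f t = t := by
  rw [HU, Subgroup.mem_inf]
  exact Iff.rfl

lemma fix_to_mapsVal {f : Equiv.Perm I} {u : ℝ} (h0 : 0 ≤ u) (h1 : u ≤ 1)
    (h : f ⟨u, h0, h1⟩ = ⟨u, h0, h1⟩) : MapsVal f u u := fun t ht => by
  rw [show t = (⟨u, h0, h1⟩ : I) from Subtype.ext ht, h]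

lemma core_step {N : Subgroup (Equiv.Perm I)} {S T : Set ℝ}
    (hSfin : S.Finite) (hTfin : T.Finite)
    (hSd : ∀ x ∈ S, 0 < x ∧ x < 1 ∧ IsDyadic x)
    (hTd : ∀ x ∈ T, 0 < x ∧ x < 1 ∧ IsDyadic x)
    {α : ℝ} (hαS : α ∈ S) (hαT : α ∉ T)
    (hS : HU S ≤ N) (hT : HU T ≤ N) :
    HU (S \ {α}) ≤ N := by
  obtain ⟨hα0, hα1, hαd⟩ := hSd α hαS
  intro f hf
  obtain ⟨hfF, hffix⟩ := mem_HU.mp hf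
  set L : Set ℝ := insert 0 (S ∩ Set.Iio α) with hLdef
  set R : Set ℝ := insert 1 (S ∩ Set.Ioi α) with hRdef
  have hLfin : L.Finite := Set.Finite.insert 0 (hSfin.subset Set.inter_subset_left)
  have hRfin : R.Finite := Set.Finite.insert 1 (hSfin.subset Set.inter_subset_left)
  set p := sSup L with hpdef
  set q := sInf R with hqdef
  have hpL : p ∈ L := Set.Nonempty.csSup_mem ⟨0, Set.mem_insert 0 _⟩ hLfin
  have hqR : q ∈ R := Set.Nonempty.csInf_mem ⟨1, Set.mem_insert 1 _⟩ hRfin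
  have hpα : p < α := by
    rcases Set.mem_insert_iff.mp hpL with h | h
    · rw [h]; exact hα0
    · exact h.2
  have hαq : α < q := by
    rcases Set.mem_insert_iff.mp hqR with h | h
    · rw [h]; exact hα1
    · exact h.2
  have hp0 : 0 ≤ p := le_csSup hLfin.bddAbove (Set.mem_insert 0 _)
  have hq1 : q ≤ 1 := csInf_le hRfin.bddBelow (Set.mem_insert 1 _)
  have hpd : IsDyadic p := by
    rcases Set.mem_insert_iff.mp hpL with h | h
    · rw [h]; exact dy_zero
    · exact (hSd p h.1).2.2
  have hqd : IsDyadic q := by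
    rcases Set.mem_insert_iff.mp hqR with h | h
    · rw [h]; exact dy_one
    · exact (hSd q h.1).2.2
  have hp_ub : ∀ x ∈ S, x < α → x ≤ p :=
    fun x hx hxα => le_csSup hLfin.bddAbove (Set.mem_insert_of_mem _ ⟨hx, hxα⟩)
  have hq_lb : ∀ x ∈ S, α < x → q ≤ x :=
    fun x hx hxα => csInf_le hRfin.bddBelow (Set.mem_insert_of_mem _ ⟨hx, hxα⟩)
  have hp1 : p ≤ 1 := le_trans (le_of_lt hpα) (le_of_lt hα1)
  have hq0 : 0 ≤ q := le_trans (le_of_lt hα0) (le_of_lt hαq)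
  have hfp : MapsVal f p p := by
    rcases Set.mem_insert_iff.mp hpL with h | h
    · rw [h]; exact mapsVal_fix0 hfF
    · exact fix_to_mapsVal hp0 hp1 (hffix ⟨p, hp0, hp1⟩ ⟨h.1, ne_of_lt h.2⟩)
  have hfq : MapsVal f q q := by
    rcases Set.mem_insert_iff.mp hqR with h | h
    · rw [h]; exact mapsVal_fix1 hfF
    · exact fix_to_mapsVal hq0 hq1 (hffix ⟨q, hq0, hq1⟩ ⟨h.1, ne_of_gt h.2⟩)
  set αpt : I := ⟨α, le_of_lt hα0, le_of_lt hα1⟩ with hαptdef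
  set β := ((f αpt : I) : ℝ) with hβdef
  have hβmaps : MapsVal f α β := mapsVal_pt f α (le_of_lt hα0) (le_of_lt hα1)
  have hβd : IsDyadic β := F_dyadic hfF hαd
  have hpβ : p < β := by
    have := F_lt hfF (s := ⟨p, hp0, hp1⟩) (t := αpt) hpα
    rwa [hfp ⟨p, hp0, hp1⟩ rfl] at this
  have hβq : β < q := by
    have := F_lt hfF (s := αpt) (t := ⟨q, hq0, hq1⟩) hαq
    rwa [hfq ⟨q, hq0, hq1⟩ rfl] at this
  by_cases hβα : β = α
  · apply hS
    refine mem_HU.mpr ⟨hfF, fun t ht => ?_⟩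
    by_cases htα : (t : ℝ) = α
    · rw [show t = αpt from Subtype.ext htα]
      exact Subtype.ext (by rw [show ((f αpt : I) : ℝ) = β from rfl, hβα])
    · exact hffix t ⟨ht, htα⟩
  · have hβ0 : 0 < β := lt_of_le_of_lt hp0 hpβ
    have hβ1 : β < 1 := lt_of_lt_of_le hβq hq1
    set m := min α β with hmdef
    set M := max α β with hMdef
    have hmd : IsDyadic m := by
      rcases le_total α β with h | h
      · rw [hmdef, min_eq_left h]; exact hαd
      · rw [hmdef, min_eq_right h]; exact hβd
    have hMd : IsDyadic M := by
      rcases le_total α β with h | h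
      · rw [hMdef, max_eq_right h]; exact hβd
      · rw [hMdef, max_eq_left h]; exact hαd
    have hpm : p < m := lt_min hpα hpβ
    have hMq : M < q := max_lt hαq hβq
    have hmα : m ≤ α := min_le_left _ _
    have hmβ : m ≤ β := min_le_right _ _
    have hαM : α ≤ M := le_max_left _ _
    have hβM : β ≤ M := le_max_right _ _
    set c := (p + m)/2 with hcdef
    set d := (M + q)/2 with hddef
    have hcdy : IsDyadic c := hpd.avg hmd
    have hddy : IsDyadic d := hMd.avg hqd
    have hpc : p < c := by rw [hcdef]; linarith
    have hcm : c < m := by rw [hcdef]; linarith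
    have hMdlt : M < d := by rw [hddef]; linarith
    have hdq : d < q := by rw [hddef]; linarith
    have hc0 : 0 ≤ c := le_trans hp0 (le_of_lt hpc)
    have hd1 : d ≤ 1 := le_trans (le_of_lt hdq) hq1
    -- s₁ : pushes T ∩ (p, α) below c
    have hs1 : ∃ s₁ ∈ F, SuppIn s₁ p α ∧
        (∀ t : I, (t : ℝ) ∈ T → p < (t : ℝ) → (t : ℝ) < α → ((s₁ t : I) : ℝ) < c) := by
      set TL := T ∩ Set.Ioo p α with hTLdef
      by_cases hTL : TL.Nonempty
      · set μ := sSup TL with hμdef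
        have hTLfin : TL.Finite := hTfin.subset Set.inter_subset_left
        have hμTL : μ ∈ TL := Set.Nonempty.csSup_mem hTL hTLfin
        have hμd : IsDyadic μ := (hTd μ hμTL.1).2.2
        have hμp : p < μ := hμTL.2.1
        have hμα : μ < α := hμTL.2.2
        have hμ0 : 0 ≤ μ := le_trans hp0 (le_of_lt hμp)
        have hμ1 : μ ≤ 1 := le_of_lt (lt_trans hμα hα1)
        set c' := (p + c)/2 with hc'def
        have hc'd : IsDyadic c' := hpd.avg hcdy
        have hpc' : p < c' := by rw [hc'def]; linarith
        have hc'c : c' < c := by rw [hc'def]; linarith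
        obtain ⟨s₁, hs₁F, hs₁supp, hs₁maps⟩ := S1 hpd hαd hμd hc'd hp0 (le_of_lt hα1)
          hμp hpc' hμα (by linarith)
        refine ⟨s₁, hs₁F, hs₁supp, fun t htT htp htα' => ?_⟩
        have hle : (t : ℝ) ≤ μ := le_csSup hTLfin.bddAbove ⟨htT, htp, htα'⟩
        have hmono := F_le hs₁F (s := t) (t := ⟨μ, hμ0, hμ1⟩) hle
        rw [hs₁maps ⟨μ, hμ0, hμ1⟩ rfl] at hmono
        linarith
      · exact ⟨1, one_mem F, suppIn_one p α,
          fun t htT htp htα' => (hTL ⟨(t : ℝ), ⟨htT, htp, htα'⟩⟩).elim⟩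
    -- s₂ : pushes T ∩ (α, q) above d
    have hs2 : ∃ s₂ ∈ F, SuppIn s₂ α q ∧
        (∀ t : I, (t : ℝ) ∈ T → α < (t : ℝ) → (t : ℝ) < q → d < ((s₂ t : I) : ℝ)) := by
      set TR := T ∩ Set.Ioo α q with hTRdef
      by_cases hTR : TR.Nonempty
      · set ν := sInf TR with hνdef
        have hTRfin : TR.Finite := hTfin.subset Set.inter_subset_left
        have hνTR : ν ∈ TR := Set.Nonempty.csInf_mem hTR hTRfin
        have hνd : IsDyadic ν := (hTd ν hνTR.1).2.2
        have hνα : α < ν := hνTR.2.1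
        have hνq : ν < q := hνTR.2.2
        have hν0 : 0 ≤ ν := le_of_lt (lt_trans hα0 hνα)
        have hν1 : ν ≤ 1 := le_trans (le_of_lt hνq) hq1
        set d' := (d + q)/2 with hd'def
        have hd'd : IsDyadic d' := hddy.avg hqd
        have hdd' : d < d' := by rw [hd'def]; linarith
        have hd'q : d' < q := by rw [hd'def]; linarith
        obtain ⟨s₂, hs₂F, hs₂supp, hs₂maps⟩ := S1 hαd hqd hνd hd'd (le_of_lt hα0) hq1
          hνα (by linarith) hνq hd'q
        refine ⟨s₂, hs₂F, hs₂supp, fun t htT htα' htq => ?_⟩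
        have hle : ν ≤ (t : ℝ) := csInf_le hTRfin.bddBelow ⟨htT, htα', htq⟩
        have hmono := F_le hs₂F (s := ⟨ν, hν0, hν1⟩) (t := t) hle
        rw [hs₂maps ⟨ν, hν0, hν1⟩ rfl] at hmono
        linarith
      · exact ⟨1, one_mem F, suppIn_one α q,
          fun t htT htα' htq => (hTR ⟨(t : ℝ), ⟨htT, htα', htq⟩⟩).elim⟩
    obtain ⟨s₁, hs₁F, hs₁supp, hs₁spec⟩ := hs1
    obtain ⟨s₂, hs₂F, hs₂supp, hs₂spec⟩ := hs2
    set s := s₂ * s₁ with hsdef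
    have hsF : s ∈ F := mul_mem hs₂F hs₁F
    have hsS : s ∈ HU S := by
      refine mem_HU.mpr ⟨hsF, fun t ht => ?_⟩
      show s₂ (s₁ t) = t
      rcases lt_trichotomy ((t : ℝ)) α with hlt | heq | hgt
      · have htp : (t : ℝ) ≤ p := hp_ub _ ht hlt
        rw [hs₁supp t (Or.inl htp), hs₂supp t (Or.inl (by linarith))]
      · rw [hs₁supp t (Or.inr (le_of_eq heq.symm)), hs₂supp t (Or.inl (le_of_eq heq))]
      · have htq : q ≤ (t : ℝ) := hq_lb _ ht hgt
        rw [hs₁supp t (Or.inr (by linarith)), hs₂supp t (Or.inr htq)]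
    obtain ⟨h, hhF, hhsupp, hhmaps⟩ := S1 hcdy hddy hαd hβd hc0 hd1
      (lt_of_lt_of_le hcm hmα) (lt_of_lt_of_le hcm hmβ)
      (lt_of_le_of_lt hαM hMdlt) (lt_of_le_of_lt hβM hMdlt)
    have hfixT : ∀ t : I, (t : ℝ) ∈ T → h (s t) = s t := by
      intro t htT
      show h (s₂ (s₁ t)) = s₂ (s₁ t)
      rcases lt_trichotomy ((t : ℝ)) α with hlt | heq | hgt
      · rcases le_or_gt ((t : ℝ)) p with h1 | h2
        · rw [hs₁supp t (Or.inl h1), hs₂supp t (Or.inl (by linarith))]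
          exact hhsupp t (Or.inl (by linarith))
        · have hlt1 : ((s₁ t : I) : ℝ) < c := hs₁spec t htT h2 hlt
          rw [hs₂supp (s₁ t) (Or.inl (by linarith))]
          exact hhsupp (s₁ t) (Or.inl (le_of_lt hlt1))
      · exact absurd (heq ▸ htT) hαT
      · rw [hs₁supp t (Or.inr (le_of_lt hgt))]
        rcases le_or_gt q ((t : ℝ)) with h1 | h2
        · rw [hs₂supp t (Or.inr h1)]
          exact hhsupp t (Or.inr (by linarith))
        · have hgt1 : d < ((s₂ t : I) : ℝ) := hs₂spec t htT hgt h2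
          exact hhsupp (s₂ t) (Or.inr (le_of_lt hgt1))
    have hhN : h ∈ N := by
      have hconj : s⁻¹ * h * s ∈ HU T := by
        refine mem_HU.mpr ⟨mul_mem (mul_mem (inv_mem hsF) hhF) hsF, fun t ht => ?_⟩
        show s⁻¹ (h (s t)) = t
        rw [hfixT t ht, Equiv.Perm.inv_apply_self]
      have heq2 : h = s * (s⁻¹ * h * s) * s⁻¹ := by group
      rw [heq2]
      exact mul_mem (mul_mem (hS hsS) (hT hconj)) (inv_mem (hS hsS))
    have heS : h⁻¹ * f ∈ HU S := by
      refine mem_HU.mpr ⟨mul_mem (inv_mem hhF) hfF, fun t ht => ?_⟩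
      show h⁻¹ (f t) = t
      by_cases htα : (t : ℝ) = α
      · rw [show t = αpt from Subtype.ext htα]
        have h2 : MapsVal h⁻¹ β α := mapsVal_inv hhmaps (le_of_lt hα0) (le_of_lt hα1)
        exact Subtype.ext (h2 (f αpt) rfl)
      · rw [hffix t ⟨ht, htα⟩]
        apply suppIn_inv hhsupp
        rcases lt_trichotomy ((t : ℝ)) α with hlt | heq | hgt
        · exact Or.inl (by have := hp_ub _ ht hlt; linarith)
        · exact absurd heq htα
        · exact Or.inr (by have := hq_lb _ ht hgt; linarith)
    have hfinal : f = h * (h⁻¹ * f) := by group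
    rw [hfinal]
    exact mul_mem hhN (hS heS)

end Dev8

section Dev9

lemma core_iter {N : Subgroup (Equiv.Perm I)} {T : Set ℝ}
    (hTfin : T.Finite) (hTd : ∀ x ∈ T, 0 < x ∧ x < 1 ∧ IsDyadic x) (hT : HU T ≤ N) :
    ∀ (n : ℕ) (S : Set ℝ), S.Finite → (∀ x ∈ S, 0 < x ∧ x < 1 ∧ IsDyadic x) →
      (S \ T).ncard = n → HU S ≤ N → HU (S ∩ T) ≤ N := by
  intro n
  induction n with
  | zero =>
    intro S hSfin hSd hcard hS
    have hempty : S \ T = ∅ := (Set.ncard_eq_zero (hSfin.diff (t := T))).mp hcard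
    have hsub : S ⊆ T := by rwa [Set.diff_eq_empty] at hempty
    rwa [Set.inter_eq_self_of_subset_left hsub]
  | succ n ih =>
    intro S hSfin hSd hcard hS
    have hne : (S \ T).Nonempty :=
      Set.nonempty_of_ncard_ne_zero (by rw [hcard]; exact n.succ_ne_zero)
    obtain ⟨α, hαS, hαT⟩ := hne
    have hstep : HU (S \ {α}) ≤ N := core_step hSfin hTfin hSd hTd hαS hαT hS hT
    have hcard' : ((S \ {α}) \ T).ncard = n := by
      have h1 : (S \ {α}) \ T = (S \ T) \ {α} := by
        ext x; simp only [Set.mem_diff, Set.mem_singleton_iff]; tauto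
      rw [h1, Set.ncard_diff_singleton_of_mem (show α ∈ S \ T from ⟨hαS, hαT⟩), hcard]
      omega
    have hrec := ih (S \ {α}) (hSfin.diff (t := {α})) (fun x hx => hSd x hx.1) hcard' hstep
    have hinter : (S \ {α}) ∩ T = S ∩ T := by
      ext x
      simp only [Set.mem_inter_iff, Set.mem_diff, Set.mem_singleton_iff]
      constructor
      · rintro ⟨⟨h1, _⟩, h2⟩; exact ⟨h1, h2⟩
      · rintro ⟨h1, h2⟩; exact ⟨⟨h1, fun he => hαT (he ▸ h2)⟩, h2⟩
    rwa [hinter] at hrec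

end Dev9

theorem stmt18' (U : Set ℝ) (hfin : U.Finite)
    (hU : ∀ α ∈ U, 0 < α ∧ α < 1 ∧ IsDyadic α)
    (g : Equiv.Perm I) (hgF : g ∈ F) (hg : g ∉ HU U) :
    ∃ V : Set ℝ, V ⊂ U ∧ HU V ≤ (HU U) ⊔ Subgroup.closure {g} := by
  classical
  set N := (HU U) ⊔ Subgroup.closure {g} with hNdef
  have hgN : g ∈ N := (le_sup_right : Subgroup.closure {g} ≤ N) (Subgroup.subset_closure rfl)
  have hUN : HU U ≤ N := le_sup_left
  set g' : ℝ → ℝ := fun u => if h : u ∈ Set.Icc (0:ℝ) 1 then ((g ⟨u, h⟩ : I) : ℝ) else u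
    with hg'def
  have hg'val : ∀ (u : ℝ) (h : u ∈ Set.Icc (0:ℝ) 1), g' u = ((g ⟨u, h⟩ : I) : ℝ) := by
    intro u h
    rw [hg'def]
    exact dif_pos h
  have hg'eq : ∀ t : I, g' (t : ℝ) = ((g t : I) : ℝ) := by
    intro t
    rw [hg'val (t : ℝ) t.2]
  set W := g' '' U with hWdef
  have hWfin : W.Finite := hfin.image g'
  have hWd : ∀ y ∈ W, 0 < y ∧ y < 1 ∧ IsDyadic y := by
    rintro y ⟨x, hxU, rfl⟩
    obtain ⟨hx0, hx1, hxd⟩ := hU x hxU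
    have hxI : x ∈ Set.Icc (0:ℝ) 1 := ⟨le_of_lt hx0, le_of_lt hx1⟩
    rw [hg'val x hxI]
    exact ⟨F_pos hgF hx0, F_lt_one hgF hx1, F_dyadic hgF hxd⟩
  have hWN : HU W ≤ N := by
    intro h hh
    obtain ⟨hhF, hhfix⟩ := mem_HU.mp hh
    have hconj : g⁻¹ * h * g ∈ HU U := by
      refine mem_HU.mpr ⟨mul_mem (mul_mem (inv_mem hgF) hhF) hgF, fun t ht => ?_⟩
      show g⁻¹ (h (g t)) = t
      have hmem : ((g t : I) : ℝ) ∈ W := ⟨(t : ℝ), ht, hg'eq t⟩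
      rw [hhfix (g t) hmem, Equiv.Perm.inv_apply_self]
    have heq : h = g * (g⁻¹ * h * g) * g⁻¹ := by group
    rw [heq]
    exact mul_mem (mul_mem hgN (hUN hconj)) (inv_mem hgN)
  have hg'mono : ∀ u v : ℝ, u ∈ Set.Icc (0:ℝ) 1 → v ∈ Set.Icc (0:ℝ) 1 → u < v →
      g' u < g' v := by
    intro u v hu hv huv
    rw [hg'val u hu, hg'val v hv]
    exact F_lt hgF (s := ⟨u, hu⟩) (t := ⟨v, hv⟩) huv
  have hg'inj : ∀ u v : ℝ, u ∈ Set.Icc (0:ℝ) 1 → v ∈ Set.Icc (0:ℝ) 1 → g' u = g' v →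
      u = v := by
    intro u v hu hv he
    rcases lt_trichotomy u v with h | h | h
    · exact absurd he (ne_of_lt (hg'mono u v hu hv h))
    · exact h
    · exact absurd he.symm (ne_of_lt (hg'mono v u hv hu h))
  have hnotsub : ¬ U ⊆ W := by
    intro hsub
    have hUW : U = W := Set.eq_of_subset_of_ncard_le hsub (Set.ncard_image_le hfin) hWfin
    have hfixall : ∀ u ∈ U, g' u = u := by
      by_contra hcon
      push_neg at hcon
      obtain ⟨u0, hu0U, hu0ne⟩ := hcon
      set B := {u | u ∈ U ∧ g' u ≠ u} with hBdef
      have hBfin : B.Finite := hfin.subset (fun x hx => hx.1)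
      have hBne : B.Nonempty := ⟨u0, hu0U, hu0ne⟩
      obtain ⟨a, haB, hamin⟩ := Set.exists_min_image B id hBfin hBne
      obtain ⟨haU, hane⟩ := haB
      have haI : a ∈ Set.Icc (0:ℝ) 1 := by
        obtain ⟨h1, h2, _⟩ := hU a haU; exact ⟨le_of_lt h1, le_of_lt h2⟩
      have haW : g' a ∈ U := by rw [hUW]; exact ⟨a, haU, rfl⟩
      have hgaI : g' a ∈ Set.Icc (0:ℝ) 1 := by
        obtain ⟨h1, h2, _⟩ := hU _ haW; exact ⟨le_of_lt h1, le_of_lt h2⟩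
      rcases lt_trichotomy (g' a) a with hlt | heqa | hgt
      · have hgfix : g' (g' a) = g' a := by
          by_contra hne2
          have hmem : g' a ∈ B := ⟨haW, hne2⟩
          have := hamin _ hmem
          simp only [id] at this
          linarith
        exact hane (hg'inj _ _ hgaI haI hgfix)
      · exact hane heqa
      · have haW2 : a ∈ W := by rw [← hUW]; exact haU
        obtain ⟨b, hbU, hba⟩ := haW2
        have hbI : b ∈ Set.Icc (0:ℝ) 1 := by
          obtain ⟨h1, h2, _⟩ := hU b hbU; exact ⟨le_of_lt h1, le_of_lt h2⟩
        rcases lt_trichotomy b a with hb | hb | hb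
        · have hbfix : g' b = b := by
            by_contra hne2
            have := hamin b ⟨hbU, hne2⟩
            simp only [id] at this
            linarith
          rw [hbfix] at hba
          exact absurd hba (ne_of_lt hb)
        · rw [hb] at hba
          exact hane hba
        · have := hg'mono a b haI hbI hb
          rw [hba] at this
          linarith
    apply hg
    refine mem_HU.mpr ⟨hgF, fun t ht => ?_⟩
    have hfix := hfixall (t : ℝ) ht
    rw [hg'eq t] at hfix
    exact Subtype.ext hfix
  obtain ⟨α₀, hα₀U, hα₀W⟩ := Set.not_subset.mp hnotsub
  refine ⟨U ∩ W, ?_, ?_⟩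
  · exact (Set.ssubset_iff_of_subset Set.inter_subset_left).mpr
      ⟨α₀, hα₀U, fun h => hα₀W h.2⟩
  · exact core_iter hWfin hWd hWN ((U \ W).ncard) U hfin hU rfl hUN


/-- Let `U` be a finite set of dyadic rationals in `(0,1)` and `g ∈ F` with
`g ∉ H_U`.  Then there is a proper subset `V ⊊ U` with `H_V ⊆ ⟨H_U, g⟩`. -/
theorem stmt18 (U : Set ℝ) (hfin : U.Finite)
    (hU : ∀ α ∈ U, 0 < α ∧ α < 1 ∧ IsDyadic α)
    (g : Equiv.Perm I) (hgF : g ∈ F) (hg : g ∉ HU U) :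
    ∃ V : Set ℝ, V ⊂ U ∧ HU V ≤ (HU U) ⊔ Subgroup.closure {g} := by
  exact stmt18' U hfin hU g hgF hg
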